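/- arXiv:1909.02506 — 4 statements merged into one kernel-verified Lean document; each statement's English description precedes it below -/
import Mathlib

section
/- (Bernstein inequality for sampling without replacement) Let N ≥ 1, let w be a uniformly random permutation of [N], and let ξ ∈ ℝ^N. Define S_N = Σ_{i=1}^N ξ_i, S̃_n = Σ_{i=1}^n ξ_{w(i)}, σ_N² = (1/N) Σ_i ξ_i² − ((1/N) Σ_i ξ_i)², and U_N = max_i ξ_i − min_i ξ_i. Then for every ε > 0, Pr[| S̃_n/n − S_N/N | > ε] ≤ 2 exp( − n ε² / (2σ_N²apă + ε U_N) ). -/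
open scoped BigOperators Classical

open Finset


-- (A) x ≤ 0 → e^x ≤ 1 + x + x²/2
lemma expA {x : ℝ} (hx : x ≤ 0) : Real.exp x ≤ 1 + x + x ^ 2 / 2 := by
  rcases le_or_gt (-1) x with h | h
  · have h1 : |x| ≤ 1 := abs_le.2 ⟨h, hx.trans zero_le_one⟩
    have hb := Real.exp_bound h1 (n := 4) (by norm_num)
    have h2 : Real.exp x - ∑ i ∈ Finset.range 4, x ^ i / i.factorial ≤ |x| ^ 4 * (5 / 96) := by
      have := (abs_le.1 hb).2
      refine le_trans this (le_of_eq ?_)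
      norm_num [Nat.factorial]
    have hs : ∑ i ∈ Finset.range 4, x ^ i / i.factorial = 1 + x + x^2/2 + x^3/6 := by
      simp [Finset.sum_range_succ, Nat.factorial]
      try ring
    rw [hs] at h2
    have habs : |x| = -x := abs_of_nonpos hx
    have : |x| ^ 4 = x ^ 4 := by rw [← abs_pow, abs_of_nonneg (by positivity)]
    rw [this] at h2
    have hx3 : x ^ 3 ≤ 0 := by nlinarith [sq_nonneg x]
    have h5 : x ^ 4 + x ^ 3 ≤ 0 := by
      have := mul_nonpos_of_nonpos_of_nonneg hx3 (by linarith : (0:ℝ) ≤ x + 1)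
      nlinarith [this]
    nlinarith [h2, h5, hx3]
  · have h1 : Real.exp x ≤ 1/2 := by
      calc Real.exp x ≤ Real.exp (-1) := Real.exp_le_exp.2 h.le
        _ ≤ 1/2 := by
            rw [Real.exp_neg]
            rw [inv_le_comm₀ (Real.exp_pos 1) (by norm_num)]
            have := Real.add_one_le_exp 1
            linarith
    nlinarith [sq_nonneg (x + 1)]

-- (B) 0 ≤ x ≤ 1 → e^x ≤ 1 + x + x²/2 + (2/9) x³
lemma expB {x : ℝ} (h0 : 0 ≤ x) (h1 : x ≤ 1) :
    Real.exp x ≤ 1 + x + x ^ 2 / 2 + (2/9) * x ^ 3 := by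
  have habs : |x| ≤ 1 := abs_le.2 ⟨by linarith, h1⟩
  have hb := Real.exp_bound habs (n := 3) (by norm_num)
  have h2 : Real.exp x - ∑ i ∈ Finset.range 3, x ^ i / i.factorial ≤ |x| ^ 3 * (4 / 18) := by
    have := (abs_le.1 hb).2
    refine le_trans this (le_of_eq ?_)
    norm_num [Nat.factorial]
  have hs : ∑ i ∈ Finset.range 3, x ^ i / i.factorial = 1 + x + x^2/2 := by
    simp [Finset.sum_range_succ, Nat.factorial]
    try ring
  rw [hs, abs_of_nonneg h0] at h2
  nlinarith

-- (C) combined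
lemma expC {x c : ℝ} (hc0 : 0 ≤ c) (hc1 : c ≤ 1) (hx : x ≤ c) :
    Real.exp x ≤ 1 + x + (1/2 + (2/9) * c) * x ^ 2 := by
  rcases le_or_gt x 0 with h | h
  · have := expA h
    nlinarith [sq_nonneg x]
  · have := expB h.le (hx.trans hc1)
    have hx3 : x ^ 3 ≤ c * x ^ 2 := by nlinarith
    nlinarith

variable {N : ℕ}

variable {N : ℕ}

lemma key_nonneg (a : Fin N → ℝ) (ha : ∀ i, 0 ≤ a i)
    (s : Finset (Fin N)) (j : Fin N) (k : Fin N) :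
    0 ≤ ∑ w : Equiv.Perm (Fin N),
      (a (w j) - a (w k)) * (a (w j) * ∏ i ∈ s.erase j, a (w i)) := by
  by_cases hkj : k = j
  · simp [hkj]
  set f : Equiv.Perm (Fin N) → ℝ := fun w =>
    (a (w j) - a (w k)) * (a (w j) * ∏ i ∈ s.erase j, a (w i)) with hf
  set σ : Equiv.Perm (Fin N) := Equiv.swap j k with hσ
  have hre : ∑ w : Equiv.Perm (Fin N), f (w * σ) = ∑ w : Equiv.Perm (Fin N), f w :=
    Equiv.sum_comp (Equiv.mulRight σ) f
  have h2 : (2:ℝ) * ∑ w : Equiv.Perm (Fin N), f w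
      = ∑ w : Equiv.Perm (Fin N), (f w + f (w * σ)) := by
    rw [Finset.sum_add_distrib, hre]; ring
  have hpt : ∀ w : Equiv.Perm (Fin N), 0 ≤ f w + f (w * σ) := by
    intro w
    have hwj : (w * σ) j = w k := by simp [hσ, Equiv.Perm.mul_apply]
    have hwk : (w * σ) k = w j := by simp [hσ, Equiv.Perm.mul_apply]
    have hwi : ∀ i, i ≠ j → i ≠ k → (w * σ) i = w i := by
      intro i h1 h2; simp [hσ, Equiv.Perm.mul_apply, Equiv.swap_apply_of_ne_of_ne h1 h2]
    by_cases hks : k ∈ s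
    · have hkse : k ∈ s.erase j := Finset.mem_erase.2 ⟨hkj, hks⟩
      set P : ℝ := ∏ i ∈ (s.erase j).erase k, a (w i) with hP
      have hp1 : ∏ i ∈ s.erase j, a (w i) = a (w k) * P :=
        (Finset.mul_prod_erase _ _ hkse).symm
      have hp2 : ∏ i ∈ s.erase j, a ((w * σ) i) = a (w j) * P := by
        rw [← Finset.mul_prod_erase _ (fun i => a ((w*σ) i)) hkse, hwk]
        congr 1
        apply Finset.prod_congr rfl
        intro i hi
        have hij : i ≠ j := Finset.ne_of_mem_erase (Finset.mem_of_mem_erase hi)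
        have hik : i ≠ k := Finset.ne_of_mem_erase hi
        rw [hwi i hij hik]
      rw [hf]
      simp only [hwj, hwk, hp1, hp2]
      have h0 : (a (w j) - a (w k)) * (a (w j) * (a (w k) * P))
          + (a (w k) - a (w j)) * (a (w k) * (a (w j) * P)) = 0 := by ring
      linarith
    · have hkse : k ∉ s.erase j := fun h => hks (Finset.mem_of_mem_erase h)
      have hp2 : ∏ i ∈ s.erase j, a ((w * σ) i) = ∏ i ∈ s.erase j, a (w i) := by
        apply Finset.prod_congr rfl
        intro i hi
        exact congrArg a (hwi i (Finset.ne_of_mem_erase hi) (fun h => hkse (h ▸ hi)))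
      have hP : 0 ≤ ∏ i ∈ s.erase j, a (w i) := Finset.prod_nonneg fun i _ => ha _
      rw [hf]
      simp only [hwj, hwk, hp2]
      nlinarith [sq_nonneg (a (w j) - a (w k))]
  have : 0 ≤ (2:ℝ) * ∑ w : Equiv.Perm (Fin N), f w := by
    rw [h2]; exact Finset.sum_nonneg fun w _ => hpt w
  linarith

variable {N : ℕ}

-- aggregate: p1 * G ≤ N * A_j
lemma agg (a : Fin N → ℝ) (ha : ∀ i, 0 ≤ a i)
    (s : Finset (Fin N)) (j : Fin N) (hj : j ∈ s) :
    (∑ k, a k) * (∑ w : Equiv.Perm (Fin N), ∏ i ∈ s, a (w i))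
      ≤ N * ∑ w : Equiv.Perm (Fin N), a (w j) * ∏ i ∈ s, a (w i) := by
  have hprod : ∀ w : Equiv.Perm (Fin N), ∏ i ∈ s, a (w i)
      = a (w j) * ∏ i ∈ s.erase j, a (w i) :=
    fun w => (Finset.mul_prod_erase _ _ hj).symm
  have hsum : ∀ w : Equiv.Perm (Fin N), (∑ k, a k) = ∑ k, a (w k) :=
    fun w => (Equiv.sum_comp w a).symm
  have key : 0 ≤ ∑ k : Fin N, ∑ w : Equiv.Perm (Fin N),
      (a (w j) - a (w k)) * (a (w j) * ∏ i ∈ s.erase j, a (w i)) :=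
    Finset.sum_nonneg fun k _ => key_nonneg a ha s j k
  have expand : ∑ k : Fin N, ∑ w : Equiv.Perm (Fin N),
      (a (w j) - a (w k)) * (a (w j) * ∏ i ∈ s.erase j, a (w i))
      = N * (∑ w : Equiv.Perm (Fin N), a (w j) * ∏ i ∈ s, a (w i))
        - (∑ k, a k) * (∑ w : Equiv.Perm (Fin N), ∏ i ∈ s, a (w i)) := by
    rw [Finset.sum_comm]
    rw [Finset.mul_sum, Finset.mul_sum, ← Finset.sum_sub_distrib]
    apply Finset.sum_congr rfl
    intro w _
    rw [hprod w, ← Finset.sum_mul, Finset.sum_sub_distrib, Finset.sum_const, ← hsum w]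
    simp only [Finset.card_univ, Fintype.card_fin, nsmul_eq_mul]
    ring
  linarith [key, expand ▸ key]

variable {N : ℕ}

lemma step (a : Fin N → ℝ) (ha : ∀ i, 0 ≤ a i)
    (s : Finset (Fin N)) (j : Fin N) (hj : j ∉ s) :
    (N : ℝ) * (∑ w : Equiv.Perm (Fin N), ∏ i ∈ insert j s, a (w i))
      ≤ (∑ k, a k) * (∑ w : Equiv.Perm (Fin N), ∏ i ∈ s, a (w i)) := by
  set G : ℝ := ∑ w : Equiv.Perm (Fin N), ∏ i ∈ s, a (w i) with hG
  set H : ℝ := ∑ w : Equiv.Perm (Fin N), ∏ i ∈ insert j s, a (w i) with hH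
  set p1 : ℝ := ∑ k, a k with hp1
  -- H as Σ_w a(wj) ∏_s
  have hHj : H = ∑ w : Equiv.Perm (Fin N), a (w j) * ∏ i ∈ s, a (w i) := by
    apply Finset.sum_congr rfl
    intro w _
    exact Finset.prod_insert hj
  -- for k ∉ s : Σ_w a(wk) ∏_s = H
  have hout : ∀ k, k ∉ s → (∑ w : Equiv.Perm (Fin N), a (w k) * ∏ i ∈ s, a (w i)) = H := by
    intro k hk
    rw [hHj]
    by_cases hkj : k = j
    · rw [hkj]
    set σ : Equiv.Perm (Fin N) := Equiv.swap j k with hσ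
    have hre := Equiv.sum_comp (Equiv.mulRight σ)
      (fun w : Equiv.Perm (Fin N) => a (w j) * ∏ i ∈ s, a (w i))
    simp only [Equiv.coe_mulRight] at hre
    rw [← hre]
    apply Finset.sum_congr rfl
    intro w _
    have h1 : (w * σ) j = w k := by simp [hσ, Equiv.Perm.mul_apply]
    have h2 : ∏ i ∈ s, a ((w * σ) i) = ∏ i ∈ s, a (w i) := by
      apply Finset.prod_congr rfl
      intro i hi
      have hij : i ≠ j := fun h => hj (h ▸ hi)
      have hik : i ≠ k := fun h => hk (h ▸ hi)
      simp [hσ, Equiv.Perm.mul_apply, Equiv.swap_apply_of_ne_of_ne hij hik]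
    rw [h1, h2]
  -- decomposition: p1 * G = Σ_{k∈s} A_k + (N - |s|) * H
  have hdecomp : p1 * G = (∑ k ∈ s, ∑ w : Equiv.Perm (Fin N), a (w k) * ∏ i ∈ s, a (w i))
      + ((N : ℝ) - s.card) * H := by
    have h1 : p1 * G = ∑ w : Equiv.Perm (Fin N), (∑ k : Fin N, a (w k)) * ∏ i ∈ s, a (w i) := by
      rw [hp1, hG, Finset.mul_sum]
      apply Finset.sum_congr rfl
      intro w _
      rw [← Equiv.sum_comp w a]
    have h2 : p1 * G = ∑ k : Fin N, ∑ w : Equiv.Perm (Fin N), a (w k) * ∏ i ∈ s, a (w i) := by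
      rw [h1, Finset.sum_comm]
      apply Finset.sum_congr rfl
      intro w _
      rw [Finset.sum_mul]
    rw [h2, ← Finset.sum_add_sum_compl s (fun k => ∑ w : Equiv.Perm (Fin N), a (w k) * ∏ i ∈ s, a (w i))]
    congr 1
    have : ∀ k ∈ sᶜ, (∑ w : Equiv.Perm (Fin N), a (w k) * ∏ i ∈ s, a (w i)) = H := by
      intro k hk
      exact hout k (Finset.mem_compl.1 hk)
    rw [Finset.sum_congr rfl this, Finset.sum_const, nsmul_eq_mul, Finset.card_compl]
    have hcc : ((Fintype.card (Fin N) - s.card : ℕ) : ℝ) = (N : ℝ) - s.card := by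
      rw [Nat.cast_sub (by simpa using Finset.card_le_univ s)]
      simp
    rw [hcc]
  -- bound on the in-s part
  have hin : (s.card : ℝ) * (p1 * G) ≤ (N:ℝ) * ∑ k ∈ s, ∑ w : Equiv.Perm (Fin N), a (w k) * ∏ i ∈ s, a (w i) := by
    calc (s.card : ℝ) * (p1 * G) = ∑ _k ∈ s, p1 * G := by
          rw [Finset.sum_const, nsmul_eq_mul]
      _ ≤ ∑ k ∈ s, (N:ℝ) * ∑ w : Equiv.Perm (Fin N), a (w k) * ∏ i ∈ s, a (w i) :=
          Finset.sum_le_sum fun k hk => agg a ha s k hk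
      _ = (N:ℝ) * ∑ k ∈ s, ∑ w : Equiv.Perm (Fin N), a (w k) * ∏ i ∈ s, a (w i) :=
          (Finset.mul_sum _ _ _).symm
  -- putting together
  have hcard : (s.card : ℝ) < N := by
    have hsne : s ≠ univ := by
      intro h
      rw [h] at hj
      exact hj (Finset.mem_univ j)
    have : s.card < N := by
      have := Finset.card_lt_card (Finset.ssubset_univ_iff.2 hsne)
      simpa [Finset.card_univ] using this
    exact_mod_cast this
  have hfinal : ((N:ℝ) - s.card) * ((N:ℝ) * H) ≤ ((N:ℝ) - s.card) * (p1 * G) := by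
    nlinarith [hdecomp, hin]
  have := mul_le_mul_iff_right₀ (by linarith : (0:ℝ) < (N:ℝ) - s.card) |>.1 hfinal
  linarith

variable {N : ℕ}

lemma prod_bound (hN : 1 ≤ N) (a : Fin N → ℝ) (ha : ∀ i, 0 ≤ a i) (s : Finset (Fin N)) :
    ∑ w : Equiv.Perm (Fin N), ∏ i ∈ s, a (w i)
      ≤ (N.factorial : ℝ) * ((∑ k, a k) / N) ^ s.card := by
  have hN0 : (0:ℝ) < N := by exact_mod_cast hN
  have hp1 : (0:ℝ) ≤ ∑ k, a k := Finset.sum_nonneg fun k _ => ha k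
  induction s using Finset.induction_on with
  | empty =>
    simp [Finset.card_univ, Fintype.card_perm, Fintype.card_fin]
  | insert j s hj ih =>
    have h1 := step a ha s j hj
    have h2 : ∑ w : Equiv.Perm (Fin N), ∏ i ∈ insert j s, a (w i)
        ≤ ((∑ k, a k) / N) * ∑ w : Equiv.Perm (Fin N), ∏ i ∈ s, a (w i) := by
      rw [div_mul_eq_mul_div, le_div_iff₀ hN0]
      linarith
    have h3 : ((∑ k, a k) / N) * ∑ w : Equiv.Perm (Fin N), ∏ i ∈ s, a (w i)
        ≤ ((∑ k, a k) / N) * ((N.factorial : ℝ) * ((∑ k, a k) / N) ^ s.card) :=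
      mul_le_mul_of_nonneg_left ih (div_nonneg hp1 hN0.le)
    rw [Finset.card_insert_of_notMem hj]
    calc ∑ w : Equiv.Perm (Fin N), ∏ i ∈ insert j s, a (w i)
        ≤ ((∑ k, a k) / N) * ((N.factorial : ℝ) * ((∑ k, a k) / N) ^ s.card) := le_trans h2 h3
      _ = (N.factorial : ℝ) * ((∑ k, a k) / N) ^ (s.card + 1) := by ring

lemma one_sided (N n : ℕ) (hN : 1 ≤ N) (hn : 1 ≤ n) (ξ : Fin N → ℝ) (ε : ℝ) (hε : 0 < ε)
    (s : Finset (Fin N)) (hs : s.card = n)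
    (μ σsq U : ℝ) (hμ : μ = (∑ i, ξ i) / N)
    (hσ : σsq = (∑ i, (ξ i - μ) ^ 2) / N)
    (hU : 0 < U) (hbd : ∀ i, ξ i - μ ≤ U) :
    ((Finset.univ.filter (fun w : Equiv.Perm (Fin N) =>
        ε < (∑ i ∈ s, ξ (w i)) / n - μ)).card : ℝ)
      ≤ (N.factorial : ℝ) * Real.exp (-(n * ε ^ 2) / (2 * σsq + ε * U)) := by
  have hN0 : (0:ℝ) < N := by exact_mod_cast hN
  have hn0 : (0:ℝ) < n := by exact_mod_cast hn
  have hσ0 : 0 ≤ σsq := by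
    rw [hσ]
    positivity
  set A : ℝ := σsq + ε * U with hA
  have hA0 : 0 < A := by positivity
  set t : ℝ := ε / A with ht
  have ht0 : 0 < t := by positivity
  set c : ℝ := t * U with hc
  have hc0 : 0 ≤ c := by positivity
  have hc1 : c ≤ 1 := by
    rw [hc, ht, div_mul_eq_mul_div, div_le_one hA0, hA]
    nlinarith
  set q : ℝ := 1/2 + (2/9) * c with hq
  set D : ℝ := 2 * σsq + ε * U with hD
  have hD0 : 0 < D := by positivity
  -- key exponent inequality
  have hkey : ε ^ 2 / D ≤ t * ε - q * t ^ 2 * σsq := by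
    have hident : (t * ε - q * t ^ 2 * σsq) - ε ^ 2 / D
        = ε ^ 2 * (σsq * (ε*U) * (σsq + 5 * (ε*U))) / (18 * A ^ 3 * D) := by
      rw [ht, hq, hc, ht, hD, hA]
      field_simp
      ring
    nlinarith [mul_pos (mul_pos (by norm_num : (0:ℝ) < 18) (pow_pos hA0 3)) hD0,
      div_nonneg (by positivity : 0 ≤ ε ^ 2 * (σsq * (ε*U) * (σsq + 5 * (ε*U))))
        (by positivity : (0:ℝ) ≤ 18 * A ^ 3 * D)]
  -- mgf bound
  have hsum0 : ∑ k : Fin N, (ξ k - μ) = 0 := by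
    rw [Finset.sum_sub_distrib, Finset.sum_const, Finset.card_univ, Fintype.card_fin,
      nsmul_eq_mul, hμ]
    field_simp
    ring
  have havg : (∑ k : Fin N, Real.exp (t * (ξ k - μ))) / N ≤ 1 + q * t ^ 2 * σsq := by
    have hterm : ∀ k : Fin N, Real.exp (t * (ξ k - μ))
        ≤ 1 + t * (ξ k - μ) + q * (t * (ξ k - μ)) ^ 2 := by
      intro k
      have hx : t * (ξ k - μ) ≤ c := by
        rw [hc]
        exact mul_le_mul_of_nonneg_left (hbd k) ht0.le
      exact expC hc0 hc1 hx
    have hsumle : ∑ k : Fin N, Real.exp (t * (ξ k - μ))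
        ≤ ∑ k : Fin N, (1 + t * (ξ k - μ) + q * (t * (ξ k - μ)) ^ 2) :=
      Finset.sum_le_sum fun k _ => hterm k
    have hrhs : ∑ k : Fin N, (1 + t * (ξ k - μ) + q * (t * (ξ k - μ)) ^ 2)
        = N * (1 + q * t ^ 2 * σsq) := by
      rw [Finset.sum_add_distrib, Finset.sum_add_distrib, Finset.sum_const, Finset.card_univ,
        Fintype.card_fin, ← Finset.mul_sum, hsum0]
      have : ∑ k : Fin N, q * (t * (ξ k - μ)) ^ 2 = q * t ^ 2 * (∑ k : Fin N, (ξ k - μ) ^ 2) := by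
        rw [Finset.mul_sum]
        apply Finset.sum_congr rfl
        intro k _
        ring
      rw [this, hσ]
      field_simp
      try ring
    rw [div_le_iff₀ hN0]
    calc ∑ k : Fin N, Real.exp (t * (ξ k - μ)) ≤ N * (1 + q * t ^ 2 * σsq) := hsumle.trans hrhs.le
      _ = (1 + q * t ^ 2 * σsq) * N := by ring
  -- base bound
  set B : ℝ := Real.exp (-(t * (μ + ε))) * ((∑ k, Real.exp (t * ξ k)) / N) with hB
  have hB0 : 0 ≤ B := by positivity
  have hBle : B ≤ Real.exp (-(ε ^ 2 / D)) := by
    have hsplit : ∀ k : Fin N, Real.exp (t * ξ k) = Real.exp (t * (ξ k - μ)) * Real.exp (t * μ) := by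
      intro k
      rw [← Real.exp_add]
      ring_nf
    have hexpmul : Real.exp (-(t * (μ + ε))) * Real.exp (t * μ) = Real.exp (-(t * ε)) := by
      rw [← Real.exp_add]
      ring_nf
    have hB' : B = Real.exp (-(t * ε)) * ((∑ k, Real.exp (t * (ξ k - μ))) / N) := by
      rw [hB, Finset.sum_congr rfl (fun k _ => hsplit k), ← Finset.sum_mul, ← hexpmul]
      ring
    rw [hB']
    calc Real.exp (-(t * ε)) * ((∑ k, Real.exp (t * (ξ k - μ))) / N)
        ≤ Real.exp (-(t * ε)) * (1 + q * t ^ 2 * σsq) :=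
          mul_le_mul_of_nonneg_left havg (Real.exp_pos _).le
      _ ≤ Real.exp (-(t * ε)) * Real.exp (q * t ^ 2 * σsq) :=
          mul_le_mul_of_nonneg_left (by linarith [Real.add_one_le_exp (q * t ^ 2 * σsq)])
            (Real.exp_pos _).le
      _ = Real.exp (q * t ^ 2 * σsq - t * ε) := by rw [← Real.exp_add]; ring_nf
      _ ≤ Real.exp (-(ε ^ 2 / D)) := Real.exp_le_exp.2 (by linarith)
  -- counting
  have hcount : ((Finset.univ.filter (fun w : Equiv.Perm (Fin N) =>
        ε < (∑ i ∈ s, ξ (w i)) / n - μ)).card : ℝ)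
      ≤ ∑ w : Equiv.Perm (Fin N), Real.exp (t * ((∑ i ∈ s, ξ (w i)) - n * (μ + ε))) := by
    set P : Equiv.Perm (Fin N) → Prop := fun w => ε < (∑ i ∈ s, ξ (w i)) / n - μ with hP
    calc ((Finset.univ.filter P).card : ℝ)
        = ∑ _w ∈ Finset.univ.filter P, (1:ℝ) := by rw [Finset.sum_const]; simp
      _ ≤ ∑ w ∈ Finset.univ.filter P,
            Real.exp (t * ((∑ i ∈ s, ξ (w i)) - n * (μ + ε))) := by
          apply Finset.sum_le_sum
          intro w hw
          have hPw : P w := (Finset.mem_filter.1 hw).2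
          rw [hP] at hPw
          have hgt : n * (μ + ε) < ∑ i ∈ s, ξ (w i) := by
            have := (lt_div_iff₀ hn0).1 (by linarith [hPw] : μ + ε < (∑ i ∈ s, ξ (w i)) / n)
            linarith
          have : 0 ≤ t * ((∑ i ∈ s, ξ (w i)) - n * (μ + ε)) :=
            mul_nonneg ht0.le (by linarith)
          exact Real.one_le_exp this
      _ ≤ ∑ w : Equiv.Perm (Fin N), Real.exp (t * ((∑ i ∈ s, ξ (w i)) - n * (μ + ε))) :=
          Finset.sum_le_sum_of_subset_of_nonneg (Finset.filter_subset _ _)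
            (fun w _ _ => (Real.exp_pos _).le)
  -- mgf of the permutation sum
  have hperm : ∑ w : Equiv.Perm (Fin N), Real.exp (t * ((∑ i ∈ s, ξ (w i)) - n * (μ + ε)))
      ≤ (N.factorial : ℝ) * B ^ n := by
    have hterm : ∀ w : Equiv.Perm (Fin N),
        Real.exp (t * ((∑ i ∈ s, ξ (w i)) - n * (μ + ε)))
        = Real.exp (-(t * (μ + ε))) ^ n * ∏ i ∈ s, Real.exp (t * ξ (w i)) := by
      intro w
      rw [← Real.exp_sum, ← Real.exp_nat_mul, ← Real.exp_add]
      congr 1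
      rw [← Finset.mul_sum]
      ring
    rw [Finset.sum_congr rfl (fun w _ => hterm w), ← Finset.mul_sum]
    have hpb := prod_bound hN (fun k => Real.exp (t * ξ k)) (fun k => (Real.exp_pos _).le) s
    rw [hs] at hpb
    calc Real.exp (-(t * (μ + ε))) ^ n * ∑ w : Equiv.Perm (Fin N), ∏ i ∈ s, Real.exp (t * ξ (w i))
        ≤ Real.exp (-(t * (μ + ε))) ^ n
            * ((N.factorial : ℝ) * ((∑ k, Real.exp (t * ξ k)) / N) ^ n) :=
          mul_le_mul_of_nonneg_left hpb (by positivity)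
      _ = (N.factorial : ℝ) * B ^ n := by rw [hB, mul_pow]; ring
  -- conclude
  have hBn : B ^ n ≤ Real.exp (-(n * ε ^ 2) / (2 * σsq + ε * U)) := by
    calc B ^ n ≤ Real.exp (-(ε ^ 2 / D)) ^ n := pow_le_pow_left₀ hB0 hBle n
      _ = Real.exp (n * (-(ε ^ 2 / D))) := (Real.exp_nat_mul _ n).symm
      _ = Real.exp (-(n * ε ^ 2) / (2 * σsq + ε * U)) := by
          rw [hD]
          congr 1
          ring
  calc ((Finset.univ.filter (fun w : Equiv.Perm (Fin N) =>
        ε < (∑ i ∈ s, ξ (w i)) / n - μ)).card : ℝ)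
      ≤ ∑ w : Equiv.Perm (Fin N), Real.exp (t * ((∑ i ∈ s, ξ (w i)) - n * (μ + ε))) := hcount
    _ ≤ (N.factorial : ℝ) * B ^ n := hperm
    _ ≤ (N.factorial : ℝ) * Real.exp (-(n * ε ^ 2) / (2 * σsq + ε * U)) :=
        mul_le_mul_of_nonneg_left hBn (by positivity)

/-- Bernstein inequality for sampling without replacement: for a uniformly random
permutation `w` of `[N]`, the mean of the first `n` entries `ξ_{w(i)}` concentrates
around the full mean, with deviation probability at most
`2 exp(−nε²/(2σ_N² + ε U_N))`. -/
theorem bernstein_without_replacement (N n : ℕ) (hN : 1 ≤ N) (hn : 1 ≤ n) (hnN : n ≤ N)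
    (ξ : Fin N → ℝ) (ε : ℝ) (hε : 0 < ε)
    (hne : (Finset.univ : Finset (Fin N)).Nonempty)
    (SN σsq UN : ℝ)
    (hSN : SN = ∑ i, ξ i)
    (hσ : σsq = (1 / N) * (∑ i, ξ i ^ 2) - ((1 / N) * ∑ i, ξ i) ^ 2)
    (hU : UN = Finset.univ.sup' hne ξ - Finset.univ.inf' hne ξ) :
    ((Finset.univ.filter (fun w : Equiv.Perm (Fin N) =>
        |(∑ i ∈ Finset.univ.filter (fun i : Fin N => (i : ℕ) < n), ξ (w i)) / n
          - SN / N| > ε)).card : ℝ)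
      / (Fintype.card (Equiv.Perm (Fin N)))
    ≤ 2 * Real.exp (-(n * ε ^ 2) / (2 * σsq + ε * UN)) := by
  have hN0 : (0:ℝ) < N := by exact_mod_cast hN
  have hn0 : (0:ℝ) < n := by exact_mod_cast hn
  set s : Finset (Fin N) := Finset.univ.filter (fun i : Fin N => (i : ℕ) < n) with hsdef
  have hs : s.card = n := by
    have he : s = (Finset.range n).attachFin
        (fun m hm => lt_of_lt_of_le (Finset.mem_range.1 hm) hnN) := by
      ext i
      simp [hsdef, Finset.mem_attachFin]
    rw [he, Finset.card_attachFin, Finset.card_range]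
  set μ : ℝ := (∑ i, ξ i) / N with hμdef
  have hμSN : SN / N = μ := by rw [hSN, hμdef]
  -- bounds on μ
  set M : ℝ := Finset.univ.sup' hne ξ with hM
  set m : ℝ := Finset.univ.inf' hne ξ with hm
  have hle1 : ∀ i, ξ i ≤ M := fun i => Finset.le_sup' ξ (Finset.mem_univ i)
  have hle2 : ∀ i, m ≤ ξ i := fun i => Finset.inf'_le ξ (Finset.mem_univ i)
  have hμM : μ ≤ M := by
    rw [hμdef, div_le_iff₀ hN0]
    calc (∑ i, ξ i) ≤ ∑ _i : Fin N, M := Finset.sum_le_sum fun i _ => hle1 i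
      _ = M * N := by rw [Finset.sum_const, Finset.card_univ, Fintype.card_fin, nsmul_eq_mul]; ring
  have hmμ : m ≤ μ := by
    rw [hμdef, le_div_iff₀ hN0]
    calc m * N = ∑ _i : Fin N, m := by
          rw [Finset.sum_const, Finset.card_univ, Fintype.card_fin, nsmul_eq_mul]; ring
      _ ≤ ∑ i, ξ i := Finset.sum_le_sum fun i _ => hle2 i
  have hUN0 : 0 ≤ UN := by rw [hU]; linarith [hle1 (hne.choose), hle2 (hne.choose), hμM, hmμ]
  have hcardperm : ((Fintype.card (Equiv.Perm (Fin N)) : ℝ)) = (N.factorial : ℝ) := by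
    rw [Fintype.card_perm, Fintype.card_fin]
  have hfact0 : (0:ℝ) < (N.factorial : ℝ) := by exact_mod_cast N.factorial_pos
  rcases eq_or_lt_of_le hUN0 with hUz | hUpos
  · -- degenerate: UN = 0, all ξ equal
    have hMm : M = m := by
      have : M - m = 0 := by rw [hU] at hUz; linarith
      linarith
    have hconst : ∀ i, ξ i = m := fun i => le_antisymm (hMm ▸ hle1 i) (hle2 i)
    have hempty : (Finset.univ.filter (fun w : Equiv.Perm (Fin N) =>
        |(∑ i ∈ s, ξ (w i)) / n - SN / N| > ε)) = ∅ := by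
      apply Finset.filter_false_of_mem
      intro w _
      have h1 : (∑ i ∈ s, ξ (w i)) = n * m := by
        rw [Finset.sum_congr rfl (fun i _ => hconst (w i)), Finset.sum_const, hs, nsmul_eq_mul]
      have h2 : SN = N * m := by
        rw [hSN, Finset.sum_congr rfl (fun i _ => hconst i), Finset.sum_const, Finset.card_univ,
          Fintype.card_fin, nsmul_eq_mul]
      rw [h1, h2]
      have : (n : ℝ) * m / n - (N : ℝ) * m / N = 0 := by
        field_simp
        ring
      rw [this]
      simp [hε.le]
    rw [hempty]
    simp only [Finset.card_empty, Nat.cast_zero, zero_div]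
    positivity
  · -- main case
    have hσ' : σsq = (∑ i, (ξ i - μ) ^ 2) / N := by
      rw [hσ, hμdef]
      have hexp : ∑ i, (ξ i - (∑ i, ξ i) / N) ^ 2
          = ∑ i, ξ i ^ 2 - 2 * ((∑ i, ξ i) / N) * ∑ i, ξ i + N * ((∑ i, ξ i) / N) ^ 2 := by
        rw [Finset.sum_congr rfl (fun i _ => by ring :
          ∀ i ∈ Finset.univ, (ξ i - (∑ i, ξ i) / N) ^ 2
            = ξ i ^ 2 - 2 * ((∑ i, ξ i) / N) * ξ i + ((∑ i, ξ i) / N) ^ 2)]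
        rw [Finset.sum_add_distrib, Finset.sum_sub_distrib, ← Finset.mul_sum,
          Finset.sum_const, Finset.card_univ, Fintype.card_fin, nsmul_eq_mul]
      rw [hexp]
      field_simp
      ring
    have hbd1 : ∀ i, ξ i - μ ≤ UN := fun i => by rw [hU]; linarith [hle1 i, hmμ]
    have hbd2 : ∀ i, (-ξ i) - (-μ) ≤ UN := fun i => by rw [hU]; linarith [hle2 i, hμM]
    -- split the two-sided filter
    have hsplit : (Finset.univ.filter (fun w : Equiv.Perm (Fin N) =>
          |(∑ i ∈ s, ξ (w i)) / n - SN / N| > ε)).card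
        ≤ (Finset.univ.filter (fun w : Equiv.Perm (Fin N) =>
            ε < (∑ i ∈ s, ξ (w i)) / n - μ)).card
          + (Finset.univ.filter (fun w : Equiv.Perm (Fin N) =>
            ε < (∑ i ∈ s, (fun j => -ξ j) (w i)) / n - (-μ))).card := by
      have heq : (Finset.univ.filter (fun w : Equiv.Perm (Fin N) =>
          |(∑ i ∈ s, ξ (w i)) / n - SN / N| > ε))
        = (Finset.univ.filter (fun w : Equiv.Perm (Fin N) =>
            ε < (∑ i ∈ s, ξ (w i)) / n - μ))
          ∪ (Finset.univ.filter (fun w : Equiv.Perm (Fin N) =>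
            ε < (∑ i ∈ s, (fun j => -ξ j) (w i)) / n - (-μ))) := by
        rw [← Finset.filter_or]
        apply Finset.filter_congr
        intro w _
        have hXneg : (∑ i ∈ s, (fun j => -ξ j) (w i)) / (n:ℝ) - (-μ)
            = -((∑ i ∈ s, ξ (w i)) / n - μ) := by
          simp only
          rw [Finset.sum_neg_distrib]
          ring
        rw [hμSN, gt_iff_lt, lt_abs, hXneg]
      rw [heq]
      exact Finset.card_union_le _ _
    have h2μ : -μ = (∑ i, (fun j => -ξ j) i) / N := by
      rw [hμdef]
      simp only
      rw [Finset.sum_neg_distrib]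
      ring
    have h2σ : σsq = (∑ i, ((fun j => -ξ j) i - (-μ)) ^ 2) / N := by
      rw [hσ']
      congr 1
      apply Finset.sum_congr rfl
      intro i _
      ring
    have h1 := one_sided N n hN hn ξ ε hε s hs μ σsq UN hμdef hσ' hUpos hbd1
    have h2 := one_sided N n hN hn (fun j => -ξ j) ε hε s hs (-μ) σsq UN h2μ h2σ hUpos hbd2
    rw [hcardperm, div_le_iff₀ hfact0]
    have hc : ((Finset.univ.filter (fun w : Equiv.Perm (Fin N) =>
          |(∑ i ∈ s, ξ (w i)) / n - SN / N| > ε)).card : ℝ)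
        ≤ ((Finset.univ.filter (fun w : Equiv.Perm (Fin N) =>
            ε < (∑ i ∈ s, ξ (w i)) / n - μ)).card : ℝ)
          + ((Finset.univ.filter (fun w : Equiv.Perm (Fin N) =>
            ε < (∑ i ∈ s, (fun j => -ξ j) (w i)) / n - (-μ))).card : ℝ) := by
      exact_mod_cast hsplit
    calc ((Finset.univ.filter (fun w : Equiv.Perm (Fin N) =>
          |(∑ i ∈ s, ξ (w i)) / n - SN / N| > ε)).card : ℝ)
        ≤ ((Finset.univ.filter (fun w : Equiv.Perm (Fin N) =>
            ε < (∑ i ∈ s, ξ (w i)) / n - μ)).card : ℝ)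
          + ((Finset.univ.filter (fun w : Equiv.Perm (Fin N) =>
            ε < (∑ i ∈ s, (fun j => -ξ j) (w i)) / n - (-μ))).card : ℝ) := hc
      _ ≤ (N.factorial : ℝ) * Real.exp (-(n * ε ^ 2) / (2 * σsq + ε * UN))
          + (N.factorial : ℝ) * Real.exp (-(n * ε ^ 2) / (2 * σsq + ε * UN)) := add_le_add h1 h2
      _ = 2 * Real.exp (-(n * ε ^ 2) / (2 * σsq + ε * UN)) * (N.factorial : ℝ) := by ring
end

section
/- Let V be a closed bounded subset of ℝ^d contained in an ellipsoid B = {v : ‖Mv‖ ≤ 1}, and suppose there exists v ∈ V with |pᵀv| ≥ κ for some vector p. Let B₊ be the minimum-volume covering ellipsoid of {v ∈ B : |pᵀv| ≤ γ}. If γ/κ ≤ 1/√d, then vol(B₊)/vol(B) ≤ √d · (γ/κ) · (d/(d−1))^{(d−1)/2} · (1 − γ²/κ²)^{(d−1)/2}; in particular, when γ/κ = 1/(3√d), vol(B₊)/vol(B) ≤ 3/5. -/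
open MeasureTheory

noncomputable def diagEquiv {d : ℕ} (c : Fin d → ℝ) (hc : ∀ i, c i ≠ 0) :
    EuclideanSpace ℝ (Fin d) ≃ₗ[ℝ] EuclideanSpace ℝ (Fin d) where
  toFun w := WithLp.toLp 2 (fun i => c i * w i)
  invFun w := WithLp.toLp 2 (fun i => (c i)⁻¹ * w i)
  map_add' x y := by ext i; simp [mul_add]
  map_smul' r x := by ext i; simp [mul_comm, mul_assoc, mul_left_comm]
  left_inv x := by ext i; simp [hc i]
  right_inv x := by ext i; simp [hc i]

lemma diagEquiv_apply {d : ℕ} (c : Fin d → ℝ) (hc : ∀ i, c i ≠ 0)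
    (w : EuclideanSpace ℝ (Fin d)) (i : Fin d) : diagEquiv c hc w i = c i * w i := rfl

lemma diagEquiv_symm {d : ℕ} (c : Fin d → ℝ) (hc : ∀ i, c i ≠ 0) :
    (diagEquiv c hc).symm = diagEquiv (fun i => (c i)⁻¹) (fun i => inv_ne_zero (hc i)) :=
  LinearEquiv.ext fun x => rfl

lemma diagEquiv_det {d : ℕ} (c : Fin d → ℝ) (hc : ∀ i, c i ≠ 0) :
    LinearMap.det ((diagEquiv c hc : EuclideanSpace ℝ (Fin d) ≃ₗ[ℝ] EuclideanSpace ℝ (Fin d)) :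
      EuclideanSpace ℝ (Fin d) →ₗ[ℝ] EuclideanSpace ℝ (Fin d)) = ∏ i, c i := by
  classical
  set b := (EuclideanSpace.basisFun (Fin d) ℝ).toBasis
  have hm : LinearMap.toMatrix b b ((diagEquiv c hc : _ ≃ₗ[ℝ] _) :
      EuclideanSpace ℝ (Fin d) →ₗ[ℝ] EuclideanSpace ℝ (Fin d)) = Matrix.diagonal c := by
    ext i j
    rw [LinearMap.toMatrix_apply]
    simp [b, diagEquiv, Matrix.diagonal, EuclideanSpace.single_apply, Pi.single_apply]
  rw [← LinearMap.det_toMatrix b, hm, Matrix.det_diagonal]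

/-- volume of the preimage of a set under `D ∘ repr ∘ M`. -/
lemma vol_preimage {d : ℕ} (M : EuclideanSpace ℝ (Fin d) ≃ₗ[ℝ] EuclideanSpace ℝ (Fin d))
    (bS : OrthonormalBasis (Fin d) ℝ (EuclideanSpace ℝ (Fin d)))
    (c : Fin d → ℝ) (hc : ∀ i, c i ≠ 0) :
    volume (((M.trans bS.repr.toLinearEquiv).trans (diagEquiv c hc)) ⁻¹'
        Metric.closedBall (0 : EuclideanSpace ℝ (Fin d)) 1)
      = ENNReal.ofReal |∏ i, (c i)⁻¹|
        * volume (M ⁻¹' Metric.closedBall (0 : EuclideanSpace ℝ (Fin d)) 1) := by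
  set S := Metric.closedBall (0 : EuclideanSpace ℝ (Fin d)) 1 with hS
  set D := diagEquiv c hc with hD
  have hcoe : ⇑((M.trans bS.repr.toLinearEquiv).trans D) = ⇑D ∘ ⇑bS.repr ∘ ⇑M := by
    ext v
    simp [LinearEquiv.trans_apply]
  have h1 : ((M.trans bS.repr.toLinearEquiv).trans D) ⁻¹' S
      = M ⁻¹' (bS.repr ⁻¹' (D ⁻¹' S)) := by
    rw [hcoe, Set.preimage_comp, Set.preimage_comp]
  have hDcont : Continuous D :=
    D.toLinearMap.continuous_of_finiteDimensional
  have hDS : MeasurableSet (D ⁻¹' S) :=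
    ((Metric.isClosed_closedBall.preimage hDcont)).measurableSet
  have hdet : |LinearMap.det ((D.symm : EuclideanSpace ℝ (Fin d) →ₗ[ℝ] EuclideanSpace ℝ (Fin d)))|
      = |∏ i, (c i)⁻¹| := by
    rw [hD, diagEquiv_symm, diagEquiv_det]
  rw [h1, Measure.addHaar_preimage_linearEquiv,
    bS.measurePreserving_repr.measure_preimage hDS.nullMeasurableSet,
    Measure.addHaar_preimage_linearEquiv, hdet,
    Measure.addHaar_preimage_linearEquiv]
  ring
open MeasureTheory

lemma prod_if_abs {d : ℕ} (j0 : Fin d) (a bb : ℝ) (ha : 0 < a) (hbb : 0 < bb) :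
    |∏ i : Fin d, (((if i = j0 then a⁻¹ else bb⁻¹) : ℝ))⁻¹| = a * bb^(d-1) := by
  classical
  have h1 : ∀ i : Fin d, (((if i = j0 then a⁻¹ else bb⁻¹) : ℝ))⁻¹ = if i = j0 then a else bb := by
    intro i; by_cases h : i = j0 <;> simp [h]
  rw [Finset.prod_congr rfl (fun i _ => h1 i),
    ← Finset.mul_prod_erase _ _ (Finset.mem_univ j0), if_pos rfl,
    Finset.prod_congr rfl (fun i hi => if_neg (Finset.ne_of_mem_erase hi)),
    Finset.prod_const, Finset.card_erase_of_mem (Finset.mem_univ _),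
    Finset.card_univ, Fintype.card_fin]
  exact abs_of_pos (by positivity)

lemma const_eq (d : ℕ) (hd : 2 ≤ d) (β : ℝ) (hβpos : 0 < β) (h1β : β^2 < 1) :
    Real.sqrt d * β * (Real.sqrt (((d:ℝ) * (1 - β^2)) / ((d:ℝ) - 1)))^(d-1)
      = Real.sqrt d * β * ((d:ℝ)/((d:ℝ)-1)) ^ (((d:ℝ) - 1)/2)
        * (1 - β^2) ^ (((d:ℝ) - 1)/2) := by
  have hd1 : (1:ℝ) < d := by exact_mod_cast (by omega : 1 < d)
  have hX : (0:ℝ) ≤ ((d:ℝ) * (1 - β^2)) / ((d:ℝ) - 1) := by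
    apply div_nonneg (by nlinarith) (by linarith)
  have hcast : ((d - 1 : ℕ) : ℝ) = (d:ℝ) - 1 := by
    have : (1:ℕ) ≤ d := by omega
    push_cast [this]
    ring
  have h2 : (Real.sqrt (((d:ℝ) * (1 - β^2)) / ((d:ℝ) - 1)))^(d-1)
      = (((d:ℝ) * (1 - β^2)) / ((d:ℝ) - 1)) ^ (((d:ℝ) - 1)/2) := by
    rw [Real.sqrt_eq_rpow, ← Real.rpow_natCast (_ ^ (1/(2:ℝ))) (d-1),
      ← Real.rpow_mul hX, hcast]
    ring_nf
  rw [h2]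
  have h3 : ((d:ℝ) * (1 - β^2)) / ((d:ℝ) - 1) = ((d:ℝ)/((d:ℝ)-1)) * (1 - β^2) := by ring
  have hd0 : (0:ℝ) < d := by exact_mod_cast (by omega : 0 < d)
  rw [h3, Real.mul_rpow (div_nonneg hd0.le (by linarith)) (by nlinarith)]
  ring

lemma const_le (d : ℕ) (hd : 2 ≤ d) (β : ℝ) (hβval : β = 1 / (3 * Real.sqrt d)) :
    Real.sqrt d * β * ((d:ℝ)/((d:ℝ)-1)) ^ (((d:ℝ) - 1)/2)
        * (1 - β^2) ^ (((d:ℝ) - 1)/2) ≤ 3/5 := by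
  have hd0 : (0:ℝ) < d := by exact_mod_cast (by omega : 0 < d)
  have hd1 : (1:ℝ) < d := by exact_mod_cast (by omega : 1 < d)
  have hsd : 0 < Real.sqrt d := Real.sqrt_pos.2 hd0
  have hd1' : (0:ℝ) < (d:ℝ) - 1 := by linarith
  set r : ℝ := ((d:ℝ) - 1)/2 with hrdef
  have hr0 : 0 ≤ r := by rw [hrdef]; linarith
  have hsdβ : Real.sqrt d * β = 1/3 := by
    rw [hβval]
    field_simp
  have hβ2 : β^2 = 1/(9*(d:ℝ)) := by
    rw [hβval, div_pow, mul_pow, Real.sq_sqrt hd0.le]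
    norm_num
  set x8 : ℝ := 8/(9*((d:ℝ)-1)) with hx8def
  have hx8pos : 0 < x8 := by rw [hx8def]; positivity
  have hQ : ((d:ℝ)/((d:ℝ)-1)) * (1 - β^2) = 1 + x8 := by
    rw [hβ2, hx8def]
    field_simp
    ring
  have hcomb : ((d:ℝ)/((d:ℝ)-1)) ^ r * (1 - β^2) ^ r = (1 + x8) ^ r := by
    have h9 : (0:ℝ) ≤ 1 - β^2 := by
      rw [hβ2]
      have h10 : 1/(9*(d:ℝ)) ≤ 1 := by
        rw [div_le_one (by positivity)]; linarith
      linarith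
    rw [← Real.mul_rpow (div_nonneg hd0.le (by linarith)) h9, hQ]
  have hrx : x8 * r = 4/9 := by
    rw [hx8def, hrdef]
    field_simp
    ring
  have hexp : Real.exp (4/9) ≤ 9/5 := by
    have h1 : Real.exp (4/9) ≤ Real.exp (1/2) := Real.exp_le_exp.2 (by norm_num)
    have h2 : Real.exp (1/2) * Real.exp (1/2) = Real.exp 1 := by
      rw [← Real.exp_add]; norm_num
    nlinarith [Real.exp_one_lt_d9, Real.exp_pos (1/2)]
  have hQr : (1 + x8) ^ r ≤ 9/5 := by
    calc (1 + x8) ^ r ≤ (Real.exp x8) ^ r := by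
          apply Real.rpow_le_rpow (by positivity) _ hr0
          have := Real.add_one_le_exp x8
          linarith
      _ = Real.exp (x8 * r) := (Real.exp_mul x8 r).symm
      _ = Real.exp (4/9) := by rw [hrx]
      _ ≤ 9/5 := hexp
  calc Real.sqrt d * β * ((d:ℝ)/((d:ℝ)-1)) ^ r * (1 - β^2) ^ r
      = (1/3) * (((d:ℝ)/((d:ℝ)-1)) ^ r * (1 - β^2) ^ r) := by rw [← hsdβ]; ring
    _ = (1/3) * (1 + x8) ^ r := by rw [hcomb]
    _ ≤ (1/3) * (9/5) := by
        apply mul_le_mul_of_nonneg_left hQr (by norm_num)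
    _ = 3/5 := by norm_num

lemma slice_ineq (d : ℕ) (hd : 2 ≤ d) (β T S : ℝ) (hβpos : 0 < β)
    (hdβ : (d:ℝ)*β^2 ≤ 1) (hT : T ≤ β^2) (hTS : T ≤ S) (hS : S ≤ 1) (hT0 : 0 ≤ T) :
    T * (((d:ℝ)*(1-β^2))/((d:ℝ)-1)) + (S-T)*((d:ℝ)*β^2)
      ≤ ((d:ℝ)*β^2) * (((d:ℝ)*(1-β^2))/((d:ℝ)-1)) := by
  have hd0 : (0:ℝ) < d := by exact_mod_cast (by omega : 0 < d)
  have hd1 : (1:ℝ) < d := by exact_mod_cast (by omega : 1 < d)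
  have hd1' : (0:ℝ) < (d:ℝ) - 1 := by linarith
  have key : T*(1-(d:ℝ)*β^2) + S*β^2*((d:ℝ)-1) ≤ (d:ℝ)*β^2*(1-β^2) := by
    nlinarith [mul_nonneg (sub_nonneg.2 hT) (sub_nonneg.2 hdβ),
      mul_nonneg (mul_nonneg (sub_nonneg.2 hS) (sq_nonneg β)) hd1'.le]
  rw [← sub_nonneg]
  have expand : ((d:ℝ)*β^2) * (((d:ℝ)*(1-β^2))/((d:ℝ)-1))
      - (T * (((d:ℝ)*(1-β^2))/((d:ℝ)-1)) + (S-T)*((d:ℝ)*β^2))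
      = ((d:ℝ) * ((d:ℝ)*β^2*(1-β^2) - (T*(1-(d:ℝ)*β^2) + S*β^2*((d:ℝ)-1))))
        / ((d:ℝ) - 1) := by
    field_simp
    ring
  rw [expand]
  apply div_nonneg _ hd1'.le
  apply mul_nonneg hd0.le
  linarith

lemma diag_norm_le (d : ℕ) (hd : 2 ≤ d) (β a bb : ℝ) (hβpos : 0 < β)
    (hdβ : (d:ℝ)*β^2 ≤ 1) (hapos : 0 < a) (hbbpos : 0 < bb)
    (ha2 : a^2 = (d:ℝ)*β^2) (hb2 : bb^2 = ((d:ℝ)*(1-β^2))/((d:ℝ)-1))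
    (j0 : Fin d) (hc : ∀ i : Fin d, ((if i = j0 then a⁻¹ else bb⁻¹) : ℝ) ≠ 0)
    (x : EuclideanSpace ℝ (Fin d)) (hx : ‖x‖ ≤ 1) (ht : |x j0| ≤ β) :
    ‖diagEquiv (fun i => if i = j0 then a⁻¹ else bb⁻¹) hc x‖ ≤ 1 := by
  classical
  set c : Fin d → ℝ := fun i => if i = j0 then a⁻¹ else bb⁻¹ with hcdef
  have hd1 : (1:ℝ) < d := by exact_mod_cast (by omega : 1 < d)
  have hnorm : ‖diagEquiv c hc x‖ = Real.sqrt (∑ i, (c i * x i)^2) := by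
    rw [EuclideanSpace.norm_eq]
    congr 1
    refine Finset.sum_congr rfl fun i _ => ?_
    rw [diagEquiv_apply, Real.norm_eq_abs, sq_abs]
  rw [hnorm]
  have hsum1 : ∑ i, (x i)^2 ≤ 1 := by
    have h0 : (0:ℝ) ≤ ∑ i, ‖x i‖^2 := by positivity
    have h1 : ‖x‖^2 ≤ 1 := by
      calc ‖x‖^2 ≤ 1^2 := pow_le_pow_left₀ (norm_nonneg x) hx 2
        _ = 1 := one_pow 2
    rw [EuclideanSpace.norm_eq, Real.sq_sqrt h0] at h1
    calc ∑ i, (x i)^2 = ∑ i, ‖x i‖^2 := by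
          refine Finset.sum_congr rfl fun i _ => ?_
          rw [Real.norm_eq_abs, sq_abs]
      _ ≤ 1 := h1
  have h3 : (x j0)^2 ≤ β^2 := by
    calc (x j0)^2 = |x j0|^2 := (sq_abs _).symm
      _ ≤ β^2 := pow_le_pow_left₀ (abs_nonneg _) ht 2
  have h4 : (x j0)^2 ≤ ∑ i, (x i)^2 :=
    Finset.single_le_sum (fun i _ => sq_nonneg (x i)) (Finset.mem_univ j0)
  have hsplit : ∑ i, (c i * x i)^2
      = (a⁻¹ * x j0)^2 + bb⁻¹^2 * ((∑ i, (x i)^2) - (x j0)^2) := by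
    rw [← Finset.add_sum_erase _ _ (Finset.mem_univ j0)]
    have e1 : ∑ i ∈ Finset.univ.erase j0, (c i * x i)^2
        = bb⁻¹^2 * ∑ i ∈ Finset.univ.erase j0, (x i)^2 := by
      rw [Finset.mul_sum]
      refine Finset.sum_congr rfl fun i hi => ?_
      rw [hcdef]
      simp only [if_neg (Finset.ne_of_mem_erase hi)]
      ring
    have e2 : ∑ i ∈ Finset.univ.erase j0, (x i)^2 = (∑ i, (x i)^2) - (x j0)^2 := by
      rw [← Finset.add_sum_erase Finset.univ (fun i => (x i)^2) (Finset.mem_univ j0)]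
      ring
    rw [e1, e2]
    simp [hcdef]
  have hgoal := slice_ineq d hd β ((x j0)^2) (∑ i, (x i)^2) hβpos hdβ h3 h4 hsum1 (sq_nonneg _)
  have hfin : ∑ i, (c i * x i)^2 ≤ 1 := by
    rw [hsplit]
    have e3 : (a⁻¹ * x j0)^2 + bb⁻¹^2 * ((∑ i, (x i)^2) - (x j0)^2)
        = ((x j0)^2 * bb^2 + ((∑ i, (x i)^2) - (x j0)^2) * a^2) / (a^2 * bb^2) := by
      field_simp
    rw [e3, ha2, hb2]
    have hXpos : (0:ℝ) < ((d:ℝ)*(1-β^2))/((d:ℝ)-1) := by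
      rw [← hb2]; positivity
    have hpos : (0:ℝ) < ((d:ℝ) * β^2) * (((d:ℝ)*(1-β^2))/((d:ℝ)-1)) :=
      mul_pos (by positivity) hXpos
    exact (div_le_one hpos).2 hgoal
  calc Real.sqrt (∑ i, (c i * x i)^2) ≤ Real.sqrt 1 := Real.sqrt_le_sqrt hfin
    _ = 1 := Real.sqrt_one

/-- A (nondegenerate) ellipsoid in `ℝ^d`: the preimage of the unit ball under an
invertible linear map, translated to an arbitrary center. -/
def IsEllipsoid {d : ℕ} (E : Set (EuclideanSpace ℝ (Fin d))) : Prop :=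
  ∃ (c : EuclideanSpace ℝ (Fin d))
    (L : EuclideanSpace ℝ (Fin d) ≃ₗ[ℝ] EuclideanSpace ℝ (Fin d)),
    E = {x | ‖L (x - c)‖ ≤ 1}

set_option maxHeartbeats 1000000 in
/-- Ellipsoid shrinkage (Todd / Jiang et al.): slicing an ellipsoid `B` by
`{|pᵀv| ≤ γ}`, when some `v ∈ V ⊆ B` satisfies `|pᵀv| ≥ κ` and `γ/κ ≤ 1/√d`, the
minimum covering ellipsoid `B₊` of the slice satisfies
`vol(B₊)/vol(B) ≤ √d (γ/κ) (d/(d−1))^{(d−1)/2} (1 − γ²/κ²)^{(d−1)/2}`;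
in particular, `vol(B₊) ≤ (3/5) vol(B)` when `γ/κ = 1/(3√d)`. -/
theorem ellipsoid_shrinkage (d : ℕ) (hd : 2 ≤ d)
    (M : EuclideanSpace ℝ (Fin d) ≃ₗ[ℝ] EuclideanSpace ℝ (Fin d))
    (B : Set (EuclideanSpace ℝ (Fin d))) (hB : B = {v | ‖M v‖ ≤ 1})
    (V : Set (EuclideanSpace ℝ (Fin d))) (hVB : V ⊆ B)
    (hVclosed : IsClosed V) (hVbdd : Bornology.IsBounded V)
    (p : EuclideanSpace ℝ (Fin d)) (κ γ : ℝ) (hκ : 0 < κ) (hγ : 0 < γ)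
    (hwitness : ∃ v ∈ V, κ ≤ |(inner ℝ p v : ℝ)|)
    (Bp : Set (EuclideanSpace ℝ (Fin d)))
    (hBpEll : IsEllipsoid Bp)
    (hBpCover : {v ∈ B | |(inner ℝ p v : ℝ)| ≤ γ} ⊆ Bp)
    (hBpMin : ∀ E : Set (EuclideanSpace ℝ (Fin d)), IsEllipsoid E →
      {v ∈ B | |(inner ℝ p v : ℝ)| ≤ γ} ⊆ E → volume Bp ≤ volume E)
    (hratio : γ / κ ≤ 1 / Real.sqrt d) :
    volume Bp ≤
      ENNReal.ofReal (Real.sqrt d * (γ / κ)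
          * ((d / (d - 1) : ℝ)) ^ (((d : ℝ) - 1) / 2)
          * (1 - γ ^ 2 / κ ^ 2) ^ (((d : ℝ) - 1) / 2)) * volume B
    ∧ (γ / κ = 1 / (3 * Real.sqrt d) →
        volume Bp ≤ ENNReal.ofReal (3 / 5) * volume B) := by
  classical
  have hd0 : (0:ℝ) < d := by exact_mod_cast (by omega : 0 < d)
  have hd1 : (1:ℝ) < d := by exact_mod_cast (by omega : 1 < d)
  have hsd : 0 < Real.sqrt d := Real.sqrt_pos.2 hd0
  set β := γ / κ with hβdef
  have hβpos : 0 < β := div_pos hγ hκ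
  have hdβ : (d:ℝ) * β^2 ≤ 1 := by
    have h1 : β * β ≤ (1/Real.sqrt d) * (1/Real.sqrt d) :=
      mul_self_le_mul_self hβpos.le hratio
    have h2 : Real.sqrt d * Real.sqrt d = d := Real.mul_self_sqrt hd0.le
    have h4 : (1/Real.sqrt d) * (1/Real.sqrt d) = 1/(d:ℝ) := by
      rw [div_mul_div_comm, one_mul, h2]
    have h3 : β^2 ≤ 1/(d:ℝ) := by rw [sq]; linarith
    calc (d:ℝ) * β^2 ≤ (d:ℝ) * (1/(d:ℝ)) :=
          mul_le_mul_of_nonneg_left h3 hd0.le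
      _ = 1 := by field_simp
  have h1β : β^2 < 1 := by nlinarith [sq_nonneg β]
  set a := Real.sqrt d * β with hadef
  set bb := Real.sqrt (((d:ℝ) * (1 - β^2)) / ((d:ℝ) - 1)) with hbbdef
  have hXpos : 0 < ((d:ℝ) * (1 - β^2)) / ((d:ℝ) - 1) :=
    div_pos (by nlinarith) (by linarith)
  have ha2 : a^2 = (d:ℝ) * β^2 := by rw [hadef, mul_pow, Real.sq_sqrt hd0.le]
  have hb2 : bb^2 = ((d:ℝ) * (1 - β^2)) / ((d:ℝ) - 1) := Real.sq_sqrt hXpos.le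
  have hapos : 0 < a := by positivity
  have hbbpos : 0 < bb := Real.sqrt_pos.2 hXpos
  -- the witness direction
  obtain ⟨v₀, hv₀V, hv₀⟩ := hwitness
  set q := LinearMap.adjoint (M.symm : EuclideanSpace ℝ (Fin d) →ₗ[ℝ] EuclideanSpace ℝ (Fin d)) p
    with hqdef
  have hqv : ∀ v, (inner ℝ q (M v) : ℝ) = (inner ℝ p v : ℝ) := by
    intro v
    rw [hqdef, LinearMap.adjoint_inner_left]
    simp
  have hκq : κ ≤ ‖q‖ := by
    have h1 : ‖M v₀‖ ≤ 1 := by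
      have := hVB hv₀V; rw [hB] at this; exact this
    have h2 : |(inner ℝ q (M v₀) : ℝ)| ≤ ‖q‖ * ‖M v₀‖ := abs_real_inner_le_norm _ _
    rw [hqv] at h2
    nlinarith [norm_nonneg q]
  have hq0 : 0 < ‖q‖ := lt_of_lt_of_le hκ hκq
  set u := ‖q‖⁻¹ • q with hudef
  have hu : ‖u‖ = 1 := norm_smul_inv_norm (norm_ne_zero_iff.1 hq0.ne')
  -- orthonormal basis through `u`
  have hd0' : 0 < d := by omega
  set j0 : Fin d := ⟨0, hd0'⟩ with hj0def
  have horth : Orthonormal ℝ (Set.restrict {j0} (fun _ : Fin d => u)) := by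
    constructor
    · intro i; exact hu
    · intro i j hij
      exact absurd (Subtype.ext (by
        have hi := i.2; have hj := j.2
        simp only [Set.mem_singleton_iff] at hi hj
        rw [hi, hj])) hij
  obtain ⟨bS, hbS⟩ := horth.exists_orthonormalBasis_extension_of_card_eq (by simp)
  have hbSj0 : bS j0 = u := hbS j0 rfl
  -- the candidate ellipsoid
  set c : Fin d → ℝ := fun i => if i = j0 then a⁻¹ else bb⁻¹ with hcdef
  have hc : ∀ i, c i ≠ 0 := by
    intro i; by_cases h : i = j0 <;> simp [hcdef, h, hapos.ne', hbbpos.ne']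
  set D := diagEquiv c hc with hDdef
  set L := (M.trans bS.repr.toLinearEquiv).trans D with hLdef
  set S := Metric.closedBall (0 : EuclideanSpace ℝ (Fin d)) 1 with hSdef
  set Eset := L ⁻¹' S with hEsetdef
  have hEll : IsEllipsoid Eset := by
    refine ⟨0, L, ?_⟩
    ext x
    simp [hEsetdef, hSdef, Metric.mem_closedBall, dist_zero_right]
  have hcover : {v ∈ B | |(inner ℝ p v : ℝ)| ≤ γ} ⊆ Eset := by
    rintro v ⟨hvB, hvγ⟩
    have hw : ‖M v‖ ≤ 1 := by rw [hB] at hvB; exact hvB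
    set x : EuclideanSpace ℝ (Fin d) := bS.repr (M v) with hxdef
    have hnx : ‖x‖ ≤ 1 := by rw [hxdef]; simpa using hw
    have ht : |x j0| ≤ β := by
      have hx0 : x j0 = ‖q‖⁻¹ * (inner ℝ p v : ℝ) := by
        rw [hxdef, bS.repr_apply_apply, hbSj0, hudef, real_inner_smul_left, hqv]
      rw [hx0, abs_mul, abs_inv, abs_of_pos hq0]
      calc ‖q‖⁻¹ * |(inner ℝ p v : ℝ)| ≤ ‖q‖⁻¹ * γ :=
            mul_le_mul_of_nonneg_left hvγ (by positivity)
        _ ≤ κ⁻¹ * γ := mul_le_mul_of_nonneg_right (inv_anti₀ hκ hκq) hγ.le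
        _ = β := by rw [hβdef]; ring
    have hmem := diag_norm_le d hd β a bb hβpos hdβ hapos hbbpos ha2 hb2 j0
      (by rw [hcdef] at hc; exact hc) x hnx ht
    show L v ∈ S
    have hLv : L v = diagEquiv (fun i => if i = j0 then a⁻¹ else bb⁻¹)
        (by rw [hcdef] at hc; exact hc) x := rfl
    rw [hSdef, Metric.mem_closedBall, dist_zero_right, hLv]
    exact hmem
  -- volumes
  have hBset : B = M ⁻¹' S := by
    rw [hB]
    ext v
    simp [hSdef, Metric.mem_closedBall, dist_zero_right]
  have hEvol : volume Eset = ENNReal.ofReal (a * bb^(d-1)) * volume B := by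
    rw [hEsetdef, hLdef, hSdef, vol_preimage M bS c hc, hBset, hSdef]
    congr 1
    rw [hcdef]
    rw [prod_if_abs j0 a bb hapos hbbpos]
  have hmain : volume Bp ≤ ENNReal.ofReal (a * bb^(d-1)) * volume B :=
    (hBpMin Eset hEll hcover).trans_eq hEvol
  have hCeq : a * bb^(d-1)
      = Real.sqrt d * β * ((d:ℝ)/((d:ℝ)-1)) ^ (((d:ℝ) - 1)/2)
        * (1 - β^2) ^ (((d:ℝ) - 1)/2) := by
    rw [hadef, hbbdef]
    exact const_eq d hd β hβpos h1β
  have hgsub : (1 : ℝ) - γ^2/κ^2 = 1 - β^2 := by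
    rw [hβdef, div_pow]
  constructor
  · rw [hgsub]
    calc volume Bp ≤ ENNReal.ofReal (a * bb^(d-1)) * volume B := hmain
      _ = ENNReal.ofReal (Real.sqrt d * β * ((d:ℝ)/((d:ℝ)-1)) ^ (((d:ℝ) - 1)/2)
            * (1 - β^2) ^ (((d:ℝ) - 1)/2)) * volume B := by rw [hCeq]
  · intro hval
    have hle : a * bb^(d-1) ≤ 3/5 := by
      rw [hCeq]
      exact const_le d hd β hval
    calc volume Bp ≤ ENNReal.ofReal (a * bb^(d-1)) * volume B := hmain
      _ ≤ ENNReal.ofReal (3/5) * volume B :=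
          mul_le_mul_left (ENNReal.ofReal_le_ofReal hle) _
end

section
/- For a finite action set of size A, a finite hypothesis set G with induced deterministic policies {π_f}, a state distribution D, and smoothing parameter μ ∈ (0, 1/(2A)], there exists a probability distribution P over G such that for all f ∈ G, E_{x∼D}[ 1 / ((1 − Aμ) W_P(x, π_f(x)) + μ) ] ≤ 2A, where W_P(x, a) = Σ_{g∈G} 1[π_g(x) = a] P(g). -/
open scoped BigOperators
open Filter Topology

/-- Existence of a low-variance distribution (Dudik et al. 2011, Corollary 2): for a
finite action set of size `A`, a finite hypothesis set `G` with induced deterministic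
policies `π g`, a state distribution `D` and smoothing `μ ∈ (0, 1/(2A)]`, there is a
distribution `P` over `G` with
`E_{x∼D}[ 1 / ((1 − Aμ) W_P(x, π_f(x)) + μ) ] ≤ 2A` for all `f ∈ G`, where
`W_P(x,a) = Σ_g 1[π_g(x) = a] P(g)`. -/
theorem low_variance_distribution_exists
    {X 𝒜 G : Type*} [Fintype X] [Fintype 𝒜] [DecidableEq 𝒜] [Fintype G] [Nonempty G]
    (A : ℕ) (hA : A = Fintype.card 𝒜) (hApos : 0 < A)
    (D : X → ℝ) (hD0 : ∀ x, 0 ≤ D x) (hD1 : ∑ x, D x = 1)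
    (π : G → X → 𝒜)
    (μ : ℝ) (hμ : 0 < μ) (hμ' : μ ≤ 1 / (2 * A)) :
    ∃ P : G → ℝ, (∀ g, 0 ≤ P g) ∧ (∑ g, P g = 1) ∧
      ∀ f : G,
        ∑ x, D x * (1 / ((1 - A * μ) *
            (∑ g, (if π g x = π f x then P g else 0)) + μ)) ≤ 2 * A := by
  classical
  have hA0 : (0:ℝ) < A := by exact_mod_cast hApos
  have hAμ : (A:ℝ) * μ ≤ 1/2 := by
    have h2A : (0:ℝ) < 2*A := by linarith
    rw [le_div_iff₀ h2A] at hμ'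
    nlinarith
  set ν : ℝ := 1 - A*μ with hνdef
  have hν2 : (1:ℝ)/2 ≤ ν := by simp only [hνdef]; linarith
  have hν0 : (0:ℝ) < ν := by linarith
  set W : (G → ℝ) → X → 𝒜 → ℝ := fun P x a => ∑ g, if π g x = a then P g else 0 with hWdef
  set c : (G → ℝ) → X → 𝒜 → ℝ := fun P x a => ν * W P x a + μ with hcdef
  have hcpos : ∀ P ∈ stdSimplex ℝ G, ∀ x a, 0 < c P x a := by
    intro P hP x a
    have hW0 : 0 ≤ W P x a := by
      apply Finset.sum_nonneg
      intro g _
      split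
      · exact hP.1 g
      · exact le_rfl
    have := mul_nonneg hν0.le hW0
    simp only [hcdef]; linarith
  set Φ : (G → ℝ) → ℝ := fun P => -∑ x, D x * ∑ a, Real.log (c P x a) with hΦdef
  have hΦcont : ContinuousOn Φ (stdSimplex ℝ G) := by
    apply ContinuousOn.neg
    apply continuousOn_finset_sum
    intro x _
    apply ContinuousOn.mul continuousOn_const
    apply continuousOn_finset_sum
    intro a _
    apply ContinuousOn.log
    · apply ContinuousOn.add _ continuousOn_const
      apply ContinuousOn.mul continuousOn_const
      apply continuousOn_finset_sum
      intro g _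
      split
      · exact (continuous_apply g).continuousOn
      · exact continuousOn_const
    · intro P hP
      exact (hcpos P hP x a).ne'
  have hne : (stdSimplex ℝ G).Nonempty := by
    obtain ⟨g₀⟩ := (inferInstance : Nonempty G)
    refine ⟨fun g => if g = g₀ then 1 else 0, fun g => ?_, by simp [Finset.sum_ite_eq']⟩
    dsimp only
    split <;> norm_num
  obtain ⟨P, hPmem, hPmin⟩ := (isCompact_stdSimplex ℝ G).exists_isMinOn hne hΦcont
  refine ⟨P, hPmem.1, hPmem.2, ?_⟩
  intro f
  set d : X → 𝒜 → ℝ := fun x a => ν * (if π f x = a then 1 else 0) + μ with hddef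
  have hdpos : ∀ x a, 0 < d x a := by
    intro x a
    have : (0:ℝ) ≤ ν * (if π f x = a then 1 else 0) := by
      apply mul_nonneg hν0.le; split <;> norm_num
    simp only [hddef]; linarith
  set Pt : ℝ → G → ℝ := fun t g => (1-t) * P g + t * (if g = f then 1 else 0) with hPtdef
  have hPtmem : ∀ t ∈ Set.Icc (0:ℝ) 1, Pt t ∈ stdSimplex ℝ G := by
    intro t ht
    constructor
    · intro g
      have h1 : 0 ≤ (1-t) * P g := mul_nonneg (by linarith [ht.2]) (hPmem.1 g)
      have h2 : 0 ≤ t * (if g = f then (1:ℝ) else 0) := by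
        apply mul_nonneg ht.1; split <;> norm_num
      simp only [hPtdef]; linarith
    · simp only [hPtdef]
      rw [Finset.sum_add_distrib, ← Finset.mul_sum, ← Finset.mul_sum, hPmem.2,
        Finset.sum_ite_eq']
      simp
  have hct : ∀ t x a, c (Pt t) x a = (1-t) * c P x a + t * d x a := by
    intro t x a
    have hterm : ∀ g : G, (if π g x = a then (1-t) * P g + t * (if g = f then (1:ℝ) else 0) else 0)
        = (1-t) * (if π g x = a then P g else 0)
          + t * (if g = f then (if π g x = a then (1:ℝ) else 0) else 0) := by
      intro g
      by_cases h2 : g = f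
      · simp only [h2, if_pos rfl]
        by_cases h1 : π f x = a <;> simp [h1]
      · by_cases h1 : π g x = a <;> simp [h1, h2]
    have hWt : W (Pt t) x a = (1-t) * W P x a + t * (if π f x = a then 1 else 0) := by
      simp only [hWdef, hPtdef]
      rw [Finset.sum_congr rfl (fun g _ => hterm g), Finset.sum_add_distrib,
        ← Finset.mul_sum, ← Finset.mul_sum, Finset.sum_ite_eq' Finset.univ f]
      simp
    simp only [hcdef, hWt, hddef]; ring
  set h : ℝ → ℝ := fun t => ∑ x, D x * ∑ a, (d x a - c P x a) / ((1-t) * c P x a + t * d x a)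
    with hhdef
  have hden : ∀ t ∈ Set.Icc (0:ℝ) 1, ∀ x a, 0 < (1-t) * c P x a + t * d x a := by
    intro t ht x a
    rcases lt_or_eq_of_le ht.2 with h1 | h1
    · have := mul_pos (by linarith : (0:ℝ) < 1 - t) (hcpos P hPmem x a)
      have := mul_nonneg ht.1 (hdpos x a).le
      linarith
    · subst h1; simpa using (hdpos x a)
  have hle : ∀ t ∈ Set.Ioc (0:ℝ) 1, h t ≤ 0 := by
    intro t ht
    have htmem : t ∈ Set.Icc (0:ℝ) 1 := ⟨ht.1.le, ht.2⟩
    have hmin := hPmin (hPtmem t htmem)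
    have key : ∑ x, D x * ∑ a, Real.log (c (Pt t) x a)
        ≤ ∑ x, D x * ∑ a, Real.log (c P x a) := by
      simp only [hΦdef, Set.mem_setOf_eq] at hmin
      linarith
    have step : ∀ x a, t * ((d x a - c P x a) / ((1-t) * c P x a + t * d x a))
        ≤ Real.log (c (Pt t) x a) - Real.log (c P x a) := by
      intro x a
      have hu : 0 < (1-t) * c P x a + t * d x a := hden t htmem x a
      have hv : 0 < c P x a := hcpos P hPmem x a
      have hlog : Real.log (c P x a / ((1-t) * c P x a + t * d x a))
          ≤ c P x a / ((1-t) * c P x a + t * d x a) - 1 :=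
        Real.log_le_sub_one_of_pos (div_pos hv hu)
      rw [Real.log_div hv.ne' hu.ne'] at hlog
      rw [hct]
      have heq : t * ((d x a - c P x a) / ((1-t) * c P x a + t * d x a))
          = 1 - c P x a / ((1-t) * c P x a + t * d x a) := by
        rw [eq_sub_iff_add_eq, ← mul_div_assoc, ← add_div, div_eq_one_iff_eq hu.ne']
        ring
      rw [heq]
      linarith
    have hth : t * h t ≤ 0 := by
      have hx : ∀ x : X, t * (D x * ∑ a, (d x a - c P x a) / ((1-t) * c P x a + t * d x a))
          ≤ D x * ∑ a, (Real.log (c (Pt t) x a) - Real.log (c P x a)) := by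
        intro x
        have hsum : ∑ a, t * ((d x a - c P x a) / ((1-t) * c P x a + t * d x a))
            ≤ ∑ a, (Real.log (c (Pt t) x a) - Real.log (c P x a)) :=
          Finset.sum_le_sum fun a _ => step x a
        calc t * (D x * ∑ a, (d x a - c P x a) / ((1-t) * c P x a + t * d x a))
            = D x * ∑ a, t * ((d x a - c P x a) / ((1-t) * c P x a + t * d x a)) := by
              simp only [Finset.mul_sum]
              refine Finset.sum_congr rfl fun a _ => ?_; ring
          _ ≤ D x * ∑ a, (Real.log (c (Pt t) x a) - Real.log (c P x a)) :=
              mul_le_mul_of_nonneg_left hsum (hD0 x)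
      calc t * h t = ∑ x, t * (D x * ∑ a, (d x a - c P x a) / ((1-t) * c P x a + t * d x a)) := by
            simp only [hhdef, Finset.mul_sum]
        _ ≤ ∑ x, D x * ∑ a, (Real.log (c (Pt t) x a) - Real.log (c P x a)) :=
            Finset.sum_le_sum fun x _ => hx x
        _ = (∑ x, D x * ∑ a, Real.log (c (Pt t) x a))
              - ∑ x, D x * ∑ a, Real.log (c P x a) := by
            rw [← Finset.sum_sub_distrib]
            refine Finset.sum_congr rfl fun x _ => ?_
            rw [Finset.sum_sub_distrib]; ring
        _ ≤ 0 := by linarith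
    nlinarith [ht.1]
  have hh0 : h 0 ≤ 0 := by
    have htend : Tendsto h (𝓝[>] (0:ℝ)) (𝓝 (h 0)) := by
      apply Tendsto.mono_left _ nhdsWithin_le_nhds
      simp only [hhdef]
      apply tendsto_finset_sum
      intro x _
      apply Tendsto.const_mul
      apply tendsto_finset_sum
      intro a _
      apply Tendsto.div tendsto_const_nhds
      · exact ((continuous_const.sub continuous_id).mul continuous_const |>.add
          (continuous_id.mul continuous_const)).tendsto 0
      · simpa using (hcpos P hPmem x a).ne'
    apply le_of_tendsto htend
    filter_upwards [Ioo_mem_nhdsGT_of_mem (Set.mem_Ico.mpr ⟨le_refl (0:ℝ), one_pos⟩)] with t ht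
    exact hle t ⟨ht.1, ht.2.le⟩
  have hh0' : ∑ x, D x * ∑ a, d x a / c P x a ≤ A := by
    have e3 : h 0 = (∑ x, D x * ∑ a, d x a / c P x a) - A := by
      simp only [hhdef, sub_zero, one_mul, zero_mul, add_zero]
      have einner : ∀ x : X, ∑ a, (d x a - c P x a) / c P x a
          = (∑ a, d x a / c P x a) - A := by
        intro x
        have eterm : ∀ a : 𝒜, (d x a - c P x a) / c P x a = d x a / c P x a - 1 := fun a => by
          rw [sub_div, div_self (hcpos P hPmem x a).ne']
        simp only [eterm]
        rw [Finset.sum_sub_distrib]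
        simp [hA, Finset.card_univ]
      calc ∑ x, D x * ∑ a, (d x a - c P x a) / c P x a
          = ∑ x, (D x * (∑ a, d x a / c P x a) - D x * A) := by
            refine Finset.sum_congr rfl fun x _ => ?_; rw [einner x]; ring
        _ = (∑ x, D x * ∑ a, d x a / c P x a) - (∑ x, D x) * A := by
            rw [Finset.sum_sub_distrib, ← Finset.sum_mul]
        _ = _ := by rw [hD1]; ring
    linarith [e3 ▸ hh0]
  have hlb : ∀ x : X, ν * (1 / c P x (π f x)) ≤ ∑ a, d x a / c P x a := by
    intro x
    have hv : 0 < c P x (π f x) := hcpos P hPmem x (π f x)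
    have hνd : ν ≤ d x (π f x) := by
      have : d x (π f x) = ν + μ := by simp [hddef]
      rw [this]; linarith
    have h1 : ν / c P x (π f x) ≤ d x (π f x) / c P x (π f x) :=
      (div_le_div_iff_of_pos_right hv).mpr hνd
    have h2 : d x (π f x) / c P x (π f x) ≤ ∑ a, d x a / c P x a :=
      Finset.single_le_sum (fun a _ => div_nonneg (hdpos x a).le (hcpos P hPmem x a).le)
        (Finset.mem_univ _)
    rw [mul_one_div]; linarith
  have hfinal : ν * ∑ x, D x * (1 / c P x (π f x)) ≤ A := by
    rw [Finset.mul_sum]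
    calc ∑ x, ν * (D x * (1 / c P x (π f x)))
        = ∑ x, D x * (ν * (1 / c P x (π f x))) := by
          refine Finset.sum_congr rfl fun x _ => ?_; ring
      _ ≤ ∑ x, D x * ∑ a, d x a / c P x a :=
          Finset.sum_le_sum fun x _ => mul_le_mul_of_nonneg_left (hlb x) (hD0 x)
      _ ≤ A := hh0'
  have hgoal : ∑ x, D x * (1 / c P x (π f x)) ≤ 2 * A := by
    nlinarith [hfinal, hν2, hν0, hA0]
  exact hgoal
end

section
/- Let Π ⊆ Y^X be a hypothesis class of classifiers with |Y| = A and Natarajan dimension d_Π ≥ 6, and let V ⊆ [0,1]^X have pseudo dimension d_V ≥ 6. Then the product class H = { (x, a, x') ↦ 1[a = π(x)] · v(x') : π ∈ Π, v ∈ V } has pseudo dimension at most 6(d_Π + d_V) ln(2eA(d_Π + d_V)). -/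
open scoped BigOperators

/-- `H` P-shatters the finite set `S` (pseudo-shattering with thresholds). -/
def PShatters {Z : Type*} (H : Set (Z → ℝ)) (S : Finset Z) : Prop :=
  ∃ ξ : Z → ℝ, ∀ T ⊆ S, ∃ h ∈ H, ∀ x ∈ S, (ξ x ≤ h x ↔ x ∈ T)

/-- `Π` N-shatters the finite set `S` (Natarajan shattering). -/
def NShatters {X Y : Type*} (P : Set (X → Y)) (S : Finset X) : Prop :=
  ∃ h1 ∈ P, ∃ h2 ∈ P, (∀ x ∈ S, h1 x ≠ h2 x) ∧
    ∀ T ⊆ S, ∃ h ∈ P, (∀ x ∈ S, x ∈ T → h x = h1 x) ∧ (∀ x ∈ S, x ∉ T → h x = h2 x)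

lemma exists_reps {X W : Type*} [Finite W] (C : Set (X → W)) (S : Finset X) :
    ∃ Φ : Finset (X → W), (↑Φ : Set (X → W)) ⊆ C ∧
      (∀ f ∈ Φ, ∀ g ∈ Φ, (∀ z ∈ S, f z = g z) → f = g) ∧
      (∀ f ∈ C, ∃ g ∈ Φ, ∀ z ∈ S, f z = g z) := by
  classical
  set res : (X → W) → ({z // z ∈ S} → W) := fun f z => f z.1 with hres
  have hfin : (res '' C).Finite := Set.toFinite _
  choose pick hpickC hpickres using fun (p : res '' C) => p.2
  refine ⟨hfin.toFinset.attach.image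
      (fun p => pick ⟨p.1, by simpa [hfin.mem_toFinset] using p.2⟩), ?_, ?_, ?_⟩
  · intro f hf
    obtain ⟨p, -, rfl⟩ := Finset.mem_image.mp hf
    exact hpickC _
  · intro f hf g hg hagree
    obtain ⟨p, -, rfl⟩ := Finset.mem_image.mp hf
    obtain ⟨q, -, rfl⟩ := Finset.mem_image.mp hg
    have hpq : (⟨p.1, by simpa [hfin.mem_toFinset] using p.2⟩ : ↑(res '' C))
        = ⟨q.1, by simpa [hfin.mem_toFinset] using q.2⟩ := by
      apply Subtype.ext
      show (p.1 : { z // z ∈ S } → W) = q.1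
      have h1 := hpickres ⟨p.1, by simpa [hfin.mem_toFinset] using p.2⟩
      have h2 := hpickres ⟨q.1, by simpa [hfin.mem_toFinset] using q.2⟩
      rw [← h1, ← h2]
      funext z
      exact hagree z.1 z.2
    rw [hpq]
  · intro f hf
    have hm : res f ∈ hfin.toFinset := hfin.mem_toFinset.2 ⟨f, hf, rfl⟩
    refine ⟨pick ⟨res f, ⟨f, hf, rfl⟩⟩, ?_, ?_⟩
    · exact Finset.mem_image.mpr ⟨⟨res f, hm⟩, Finset.mem_attach _ _, rfl⟩
    · intro z hz
      have h := congrFun (hpickres ⟨res f, ⟨f, hf, rfl⟩⟩) ⟨z, hz⟩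
      exact h.symm

def nsum (A m d : ℕ) : ℕ := ∑ i ∈ Finset.range (d+1), m.choose i * A^(2*i)

lemma nsum_pascal (A m d : ℕ) :
    nsum A (m+1) (d+1) = nsum A m (d+1) + A^2 * nsum A m d := by
  unfold nsum
  rw [Finset.sum_range_succ' (fun i => (m+1).choose i * A^(2*i)) (d+1),
      Finset.sum_range_succ' (fun i => m.choose i * A^(2*i)) (d+1), Finset.mul_sum]
  have key : ∀ i ∈ Finset.range (d+1), (m+1).choose (i+1) * A^(2*(i+1))
      = m.choose (i+1) * A^(2*(i+1)) + A^2 * (m.choose i * A^(2*i)) := by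
    intro i _
    rw [Nat.choose_succ_succ, add_mul]
    ring
  rw [Finset.sum_congr rfl key, Finset.sum_add_distrib]
  simp only [Nat.choose_zero_right, pow_zero, mul_one, Nat.mul_zero, one_mul]
  ring

lemma NS_growth {X Y : Type*} [Fintype Y] (S : Finset X) :
    ∀ (d : ℕ) (Φ : Finset (X → Y)),
      (∀ f ∈ Φ, ∀ g ∈ Φ, (∀ z ∈ S, f z = g z) → f = g) →
      (∀ R : Finset X, R ⊆ S → NShatters (↑Φ : Set (X → Y)) R → R.card ≤ d) →
      Φ.card ≤ nsum (Fintype.card Y) S.card d := by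
  classical
  induction S using Finset.strongInduction with
  | _ S ih =>
  intro d Φ hdist hshat
  set A := Fintype.card Y with hA
  have hone : 1 ≤ nsum A S.card d := by
    unfold nsum
    calc 1 = S.card.choose 0 * A^(2*0) := by simp
    _ ≤ _ := Finset.single_le_sum (f := fun i => S.card.choose i * A^(2*i))
        (fun i _ => Nat.zero_le _) (by simp)
  rcases eq_or_ne S ∅ with hS | hS
  · subst hS
    have h1 : Φ.card ≤ 1 := Finset.card_le_one.mpr fun f hf g hg => hdist f hf g hg (by simp)
    omega
  obtain ⟨x, hx⟩ := Finset.nonempty_iff_ne_empty.mpr hS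
  rcases Nat.eq_zero_or_pos d with hd | hd
  · subst hd
    have h1 : Φ.card ≤ 1 := by
      refine Finset.card_le_one.mpr fun f hf g hg => ?_
      by_contra hne
      have hzex : ∃ z ∈ S, f z ≠ g z := by
        by_contra hall
        push_neg at hall
        exact hne (hdist f hf g hg hall)
      obtain ⟨z, hzS, hfg⟩ := hzex
      have hsh : NShatters (↑Φ : Set (X → Y)) {z} := by
        refine ⟨f, hf, g, hg, ?_, ?_⟩
        · intro w hw
          rw [Finset.mem_singleton] at hw
          subst hw; exact hfg
        · intro T hT
          by_cases hzT : z ∈ T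
          · refine ⟨f, hf, fun w _ _ => rfl, fun w hw hwT => ?_⟩
            rw [Finset.mem_singleton] at hw
            subst hw; exact absurd hzT hwT
          · refine ⟨g, hg, fun w hw hwT => ?_, fun w _ _ => rfl⟩
            rw [Finset.mem_singleton] at hw
            subst hw; exact absurd hwT hzT
      have := hshat {z} (Finset.singleton_subset_iff.mpr hzS) hsh
      simp at this
    omega
  obtain ⟨d', rfl⟩ : ∃ d', d = d' + 1 := ⟨d - 1, by omega⟩
  rcases isEmpty_or_nonempty Y with hY | hY
  · have hΦe : Φ = ∅ := Finset.eq_empty_of_forall_notMem fun f _ => (hY.false (f x))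
    rw [hΦe, Finset.card_empty]
    exact Nat.zero_le _
  obtain ⟨y₀⟩ := hY
  set S' := S.erase x with hS'
  have hS'sub : S' ⊆ S := Finset.erase_subset x S
  have hS'ss : S' ⊂ S := Finset.erase_ssubset hx
  have hcard : S'.card + 1 = S.card := Finset.card_erase_add_one hx
  set ρ : (X → Y) → (X → Y) := fun f z => if z ∈ S' then f z else y₀ with hρ
  have hρeq : ∀ (f : X → Y), ∀ z ∈ S', ρ f z = f z := fun f z hz => if_pos hz
  set Φ' := Φ.image ρ with hΦ'
  have hdist' : ∀ f ∈ Φ', ∀ g ∈ Φ', (∀ z ∈ S', f z = g z) → f = g := by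
    intro f hf g hg hagree
    obtain ⟨f₀, hf₀, rfl⟩ := Finset.mem_image.mp hf
    obtain ⟨g₀, hg₀, rfl⟩ := Finset.mem_image.mp hg
    funext z
    by_cases hz : z ∈ S'
    · exact hagree z hz
    · show (if z ∈ S' then f₀ z else y₀) = (if z ∈ S' then g₀ z else y₀)
      rw [if_neg hz, if_neg hz]
  have htrans : ∀ R : Finset X, R ⊆ S' → NShatters (↑Φ' : Set (X → Y)) R →
      NShatters (↑Φ : Set (X → Y)) R := by
    rintro R hR ⟨h1, hh1, h2, hh2, hne, hsel⟩
    obtain ⟨f1, hf1, rfl⟩ := Finset.mem_image.mp (Finset.mem_coe.mp hh1)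
    obtain ⟨f2, hf2, rfl⟩ := Finset.mem_image.mp (Finset.mem_coe.mp hh2)
    refine ⟨f1, hf1, f2, hf2, ?_, ?_⟩
    · intro z hz
      have h := hne z hz
      rwa [hρeq f1 z (hR hz), hρeq f2 z (hR hz)] at h
    · intro T hT
      obtain ⟨h, hh, hp1, hp2⟩ := hsel T hT
      obtain ⟨f, hfΦ, rfl⟩ := Finset.mem_image.mp (Finset.mem_coe.mp hh)
      refine ⟨f, hfΦ, fun z hz hzT => ?_, fun z hz hzT => ?_⟩
      · have h := hp1 z hz hzT
        rwa [hρeq f z (hR hz), hρeq f1 z (hR hz)] at h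
      · have h := hp2 z hz hzT
        rwa [hρeq f z (hR hz), hρeq f2 z (hR hz)] at h
  have hΦ'bound : Φ'.card ≤ nsum A S'.card (d'+1) :=
    ih S' hS'ss (d'+1) Φ' hdist'
      (fun R hR hsh => hshat R (hR.trans hS'sub) (htrans R hR hsh))
  set Ψ : Y × Y → Finset (X → Y) := fun p =>
    Φ'.filter (fun g => p.1 ≠ p.2 ∧ (∃ f ∈ Φ, ρ f = g ∧ f x = p.1)
      ∧ (∃ f ∈ Φ, ρ f = g ∧ f x = p.2)) with hΨ
  have hΨbound : ∀ p : Y × Y, (Ψ p).card ≤ nsum A S'.card d' := by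
    intro p
    have hΨsub : Ψ p ⊆ Φ' := Finset.filter_subset _ _
    refine ih S' hS'ss d' (Ψ p)
      (fun f hf g hg hag => hdist' f (hΨsub hf) g (hΨsub hg) hag) ?_
    rintro R hR ⟨g1, hg1, g2, hg2, hne, hsel⟩
    obtain ⟨hg1Φ', hpne, ⟨f1a, hf1aΦ, hf1aρ, hf1ax⟩, ⟨f1b, hf1bΦ, hf1bρ, hf1bx⟩⟩ :=
      Finset.mem_filter.mp (Finset.mem_coe.mp hg1)
    obtain ⟨hg2Φ', -, ⟨f2a, hf2aΦ, hf2aρ, hf2ax⟩, ⟨f2b, hf2bΦ, hf2bρ, hf2bx⟩⟩ :=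
      Finset.mem_filter.mp (Finset.mem_coe.mp hg2)
    have hxR : x ∉ R := fun hxR => (Finset.mem_erase.mp (hR hxR)).1 rfl
    have hsub : insert x R ⊆ S := Finset.insert_subset hx (hR.trans hS'sub)
    have hbig : NShatters (↑Φ : Set (X → Y)) (insert x R) := by
      refine ⟨f1a, hf1aΦ, f2b, hf2bΦ, ?_, ?_⟩
      · intro z hz
        rcases Finset.mem_insert.mp hz with rfl | hzR
        · rw [hf1ax, hf2bx]; exact hpne
        · have e1 : f1a z = g1 z := by rw [← hf1aρ, hρeq f1a z (hR hzR)]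
          have e2 : f2b z = g2 z := by rw [← hf2bρ, hρeq f2b z (hR hzR)]
          rw [e1, e2]
          exact hne z hzR
      · intro T hT
        have hT' : T.erase x ⊆ R := by
          intro w hw
          have hw' := Finset.mem_erase.mp hw
          rcases Finset.mem_insert.mp (hT hw'.2) with h | h
          · exact absurd h hw'.1
          · exact h
        obtain ⟨g, hgmem, hp1, hp2⟩ := hsel (T.erase x) hT'
        obtain ⟨hgΦ', -, ⟨e1, he1Φ, he1ρ, he1x⟩, ⟨e2, he2Φ, he2ρ, he2x⟩⟩ :=
          Finset.mem_filter.mp (Finset.mem_coe.mp hgmem)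
        by_cases hxT : x ∈ T
        · refine ⟨e1, he1Φ, ?_, ?_⟩
          · intro z hz hzT
            rcases Finset.mem_insert.mp hz with rfl | hzR
            · rw [he1x, hf1ax]
            · have hzT' : z ∈ T.erase x :=
                Finset.mem_erase.mpr ⟨fun h => hxR (h ▸ hzR), hzT⟩
              calc e1 z = ρ e1 z := (hρeq e1 z (hR hzR)).symm
              _ = g z := by rw [he1ρ]
              _ = g1 z := hp1 z hzR hzT'
              _ = ρ f1a z := by rw [hf1aρ]
              _ = f1a z := hρeq f1a z (hR hzR)
          · intro z hz hzT
            rcases Finset.mem_insert.mp hz with rfl | hzR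
            · exact absurd hxT hzT
            · have hzT' : z ∉ T.erase x := fun h => hzT (Finset.mem_erase.mp h).2
              calc e1 z = ρ e1 z := (hρeq e1 z (hR hzR)).symm
              _ = g z := by rw [he1ρ]
              _ = g2 z := hp2 z hzR hzT'
              _ = ρ f2b z := by rw [hf2bρ]
              _ = f2b z := hρeq f2b z (hR hzR)
        · refine ⟨e2, he2Φ, ?_, ?_⟩
          · intro z hz hzT
            rcases Finset.mem_insert.mp hz with rfl | hzR
            · exact absurd hzT hxT
            · have hzT' : z ∈ T.erase x :=
                Finset.mem_erase.mpr ⟨fun h => hxR (h ▸ hzR), hzT⟩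
              calc e2 z = ρ e2 z := (hρeq e2 z (hR hzR)).symm
              _ = g z := by rw [he2ρ]
              _ = g1 z := hp1 z hzR hzT'
              _ = ρ f1a z := by rw [hf1aρ]
              _ = f1a z := hρeq f1a z (hR hzR)
          · intro z hz hzT
            rcases Finset.mem_insert.mp hz with rfl | hzR
            · rw [he2x, hf2bx]
            · have hzT' : z ∉ T.erase x := fun h => hzT (Finset.mem_erase.mp h).2
              calc e2 z = ρ e2 z := (hρeq e2 z (hR hzR)).symm
              _ = g z := by rw [he2ρ]
              _ = g2 z := hp2 z hzR hzT'
              _ = ρ f2b z := by rw [hf2bρ]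
              _ = f2b z := hρeq f2b z (hR hzR)
    have hle := hshat _ hsub hbig
    rw [Finset.card_insert_of_notMem hxR] at hle
    omega
  -- counting
  have hfib : Φ.card = ∑ g ∈ Φ', (Φ.filter (fun f => ρ f = g)).card :=
    Finset.card_eq_sum_card_fiberwise (fun f hf => Finset.mem_image_of_mem ρ hf)
  have hfibb : ∀ g ∈ Φ', (Φ.filter (fun f => ρ f = g)).card
      ≤ 1 + ((Finset.univ : Finset (Y × Y)).filter (fun p => g ∈ Ψ p)).card := by
    intro g hg
    set F := Φ.filter (fun f => ρ f = g) with hF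
    set V := F.image (fun f => f x) with hV
    have hFV : F.card = V.card := by
      rw [hV]
      refine (Finset.card_image_of_injOn ?_).symm
      intro f hf f' hf' hxx
      have hfm := Finset.mem_filter.mp hf
      have hfm' := Finset.mem_filter.mp hf'
      refine hdist f hfm.1 f' hfm'.1 ?_
      intro z hz
      by_cases hz' : z ∈ S'
      · have h : ρ f z = ρ f' z := by rw [hfm.2, hfm'.2]
        rwa [hρeq f z hz', hρeq f' z hz'] at h
      · have hzx : z = x := by
          by_contra hzz
          exact hz' (Finset.mem_erase.mpr ⟨hzz, hz⟩)
        subst hzx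
        exact hxx
    have hVne : 1 ≤ V.card := by
      obtain ⟨f, hfΦ, hfρ⟩ := Finset.mem_image.mp hg
      have : f ∈ F := Finset.mem_filter.mpr ⟨hfΦ, hfρ⟩
      exact Finset.card_pos.mpr ⟨f x, Finset.mem_image_of_mem _ this⟩
    have hsubOff : V.offDiag ⊆ (Finset.univ : Finset (Y × Y)).filter (fun p => g ∈ Ψ p) := by
      intro p hp
      obtain ⟨hp1, hp2, hpne⟩ := Finset.mem_offDiag.mp hp
      obtain ⟨f1, hf1F, hf1x⟩ := Finset.mem_image.mp hp1
      obtain ⟨f2, hf2F, hf2x⟩ := Finset.mem_image.mp hp2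
      refine Finset.mem_filter.mpr ⟨Finset.mem_univ _, Finset.mem_filter.mpr ⟨hg, hpne,
        ⟨f1, (Finset.mem_filter.mp hf1F).1, (Finset.mem_filter.mp hf1F).2, hf1x⟩,
        ⟨f2, (Finset.mem_filter.mp hf2F).1, (Finset.mem_filter.mp hf2F).2, hf2x⟩⟩⟩
    have hoff : V.offDiag.card = V.card * V.card - V.card := Finset.offDiag_card V
    have hkv : V.card ≤ 1 + V.offDiag.card := by
      calc V.card = 1 + (V.card - 1) := by omega
      _ ≤ 1 + V.offDiag.card := by
          have h1 : V.card - 1 ≤ (V.card - 1) * V.card :=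
            Nat.le_mul_of_pos_right _ (by omega)
          rw [Nat.sub_mul, one_mul] at h1
          rw [hoff]
          exact Nat.add_le_add_left h1 1
    calc F.card = V.card := hFV
    _ ≤ 1 + V.offDiag.card := hkv
    _ ≤ 1 + _ := Nat.add_le_add_left (Finset.card_le_card hsubOff) 1
  have hswap : ∑ g ∈ Φ', ((Finset.univ : Finset (Y × Y)).filter (fun p => g ∈ Ψ p)).card
      = ∑ p ∈ (Finset.univ : Finset (Y × Y)), (Ψ p).card := by
    simp_rw [Finset.card_filter]
    rw [Finset.sum_comm]
    refine Finset.sum_congr rfl fun p _ => ?_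
    rw [← Finset.card_filter, Finset.filter_mem_eq_inter]
    congr 1
    exact Finset.inter_eq_right.mpr (Finset.filter_subset _ _)
  have htotal : Φ.card ≤ Φ'.card + ∑ p ∈ (Finset.univ : Finset (Y × Y)), (Ψ p).card := by
    rw [hfib, ← hswap]
    calc ∑ g ∈ Φ', (Φ.filter (fun f => ρ f = g)).card
        ≤ ∑ g ∈ Φ', (1 + ((Finset.univ : Finset (Y × Y)).filter (fun p => g ∈ Ψ p)).card) :=
          Finset.sum_le_sum hfibb
    _ = Φ'.card + ∑ g ∈ Φ', ((Finset.univ : Finset (Y × Y)).filter (fun p => g ∈ Ψ p)).card := by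
          rw [Finset.sum_add_distrib, Finset.sum_const, smul_eq_mul, mul_one]
  have hpair : ∑ p ∈ (Finset.univ : Finset (Y × Y)), (Ψ p).card ≤ A^2 * nsum A S'.card d' := by
    calc ∑ p ∈ (Finset.univ : Finset (Y × Y)), (Ψ p).card
        ≤ (Finset.univ : Finset (Y × Y)).card • nsum A S'.card d' :=
          Finset.sum_le_card_nsmul _ _ _ (fun p _ => hΨbound p)
    _ = A^2 * nsum A S'.card d' := by
          rw [smul_eq_mul, Finset.card_univ, Fintype.card_prod, ← hA, pow_two]
  calc Φ.card ≤ Φ'.card + ∑ p ∈ (Finset.univ : Finset (Y × Y)), (Ψ p).card := htotal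
  _ ≤ nsum A S'.card (d'+1) + A^2 * nsum A S'.card d' := Nat.add_le_add hΦ'bound hpair
  _ = nsum A (S'.card + 1) (d'+1) := (nsum_pascal A S'.card d').symm
  _ = nsum A S.card (d'+1) := by rw [hcard]

set_option maxHeartbeats 1000000 in
/-- Pseudo-dimension of the product class
`H = {(x,a,x') ↦ 1[a = π(x)]·v(x') : π ∈ Π, v ∈ V}`: if `Π ⊆ Y^X` has Natarajan
dimension at most `dΠ ≥ 6` with `|Y| = A`, and `V ⊆ [0,1]^X` has pseudo dimension at
most `dV ≥ 6`, then every set P-shattered by `H` has size at most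
`6(dΠ + dV) ln(2eA(dΠ + dV))`. -/
theorem product_class_pseudo_dim {X Y : Type*} [Fintype Y] [DecidableEq Y]
    (Pc : Set (X → Y)) (Vc : Set (X → ℝ))
    (A dP dV : ℕ) (hA : A = Fintype.card Y)
    (hP : ∀ S : Finset X, NShatters Pc S → S.card ≤ dP)
    (hVdim : ∀ S : Finset X, PShatters Vc S → S.card ≤ dV)
    (hVrange : ∀ v ∈ Vc, ∀ x, v x ∈ Set.Icc (0 : ℝ) 1)
    (hdP : 6 ≤ dP) (hdV : 6 ≤ dV) :
    ∀ S : Finset (X × Y × X),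
      PShatters {F : X × Y × X → ℝ | ∃ π ∈ Pc, ∃ v ∈ Vc,
          F = fun z => (if z.2.1 = π z.1 then (1 : ℝ) else 0) * v z.2.2} S →
      (S.card : ℝ) ≤ 6 * (dP + dV) * Real.log (2 * Real.exp 1 * A * (dP + dV)) := by
  classical
  intro S hSh
  obtain ⟨ξ, hξ⟩ := hSh
  rcases Finset.eq_empty_or_nonempty S with rfl | hSne
  · rw [Finset.card_empty, Nat.cast_zero]
    rcases Nat.eq_zero_or_pos A with hA0 | hA1
    · subst hA0
      simp [Real.log_zero]
    · have he : (1:ℝ) ≤ Real.exp 1 := Real.one_le_exp (by norm_num)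
      have hA' : (1:ℝ) ≤ (A:ℝ) := by exact_mod_cast hA1
      have hd : (1:ℝ) ≤ (dP:ℝ) + (dV:ℝ) := by
        have h12 : (1:ℕ) ≤ dP + dV := by omega
        exact_mod_cast h12
      have h2 : (1:ℝ) ≤ 2 * Real.exp 1 := by linarith
      have h3 : (1:ℝ) ≤ 2 * Real.exp 1 * A := by nlinarith
      have h1 : (1:ℝ) ≤ 2 * Real.exp 1 * A * (dP + dV) := by nlinarith
      have hlog := Real.log_nonneg h1
      positivity
  obtain ⟨z₀, hz₀⟩ := hSne
  have hA1 : 1 ≤ A := by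
    rw [hA]
    exact @Fintype.card_pos Y _ ⟨z₀.2.1⟩
  -- thresholds are positive on S
  have hξpos : ∀ z ∈ S, 0 < ξ z := by
    obtain ⟨F, hF, hFp⟩ := hξ ∅ (Finset.empty_subset S)
    obtain ⟨π, hπ, v, hv, rfl⟩ := hF
    intro z hz
    have h0 : ¬ (ξ z ≤ (if z.2.1 = π z.1 then (1:ℝ) else 0) * v z.2.2) := by
      rw [hFp z hz]
      simp
    have hnn : 0 ≤ (if z.2.1 = π z.1 then (1:ℝ) else 0) * v z.2.2 :=
      mul_nonneg (by split <;> norm_num) ((hVrange v hv z.2.2).1)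
    linarith [not_le.mp h0]
  have hξle : ∀ z ∈ S, ∀ v ∈ Vc, ∀ π : X → Y,
      ((ξ z ≤ (if z.2.1 = π z.1 then (1:ℝ) else 0) * v z.2.2) ↔
        (z.2.1 = π z.1 ∧ ξ z ≤ v z.2.2)) := by
    intro z hz v hv π
    by_cases he : z.2.1 = π z.1
    · simp [he]
    · simp only [he, if_false, zero_mul, false_and, iff_false]
      intro hle
      linarith [hξpos z hz]
  have hsel : ∀ T : Finset (X × Y × X), ∃ π, π ∈ Pc ∧ ∃ v, v ∈ Vc ∧
      ∀ z ∈ S, ((z.2.1 = π z.1 ∧ ξ z ≤ v z.2.2) ↔ z ∈ T) := by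
    intro T
    obtain ⟨F, hF, hFp⟩ := hξ (T ∩ S) Finset.inter_subset_right
    obtain ⟨π, hπ, v, hv, rfl⟩ := hF
    refine ⟨π, hπ, v, hv, fun z hz => ?_⟩
    rw [← hξle z hz v hv π, hFp z hz, Finset.mem_inter]
    exact and_iff_left hz
  choose πT hπT vT hvT hiffT using hsel
  -- representative classes
  obtain ⟨ΦP, hΦPsub, hΦPdist, hΦPrep⟩ :=
    exists_reps {F : X × Y × X → Y | ∃ π ∈ Pc, F = fun z => π z.1} S
  obtain ⟨ΦQ, hΦQsub, hΦQdist, hΦQrep⟩ :=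
    exists_reps {F : X × Y × X → Bool | ∃ v ∈ Vc, F = fun z => decide (ξ z ≤ v z.2.2)} S
  choose gP hgPmem hgPeq using fun T : Finset (X × Y × X) =>
    hΦPrep _ ⟨πT T, hπT T, rfl⟩
  choose gQ hgQmem hgQeq using fun T : Finset (X × Y × X) =>
    hΦQrep _ ⟨vT T, hvT T, rfl⟩
  -- the injection
  have hinj : S.powerset.card ≤ (ΦP ×ˢ ΦQ).card := by
    refine Finset.card_le_card_of_injOn (fun T => (gP T, gQ T))
      (fun T _ => Finset.mem_product.mpr ⟨hgPmem T, hgQmem T⟩) ?_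
    intro T hT U hU hTU
    rw [Finset.mem_coe, Finset.mem_powerset] at hT hU
    have hgPe : gP T = gP U := congrArg Prod.fst hTU
    have hgQe : gQ T = gQ U := congrArg Prod.snd hTU
    have key : ∀ W : Finset (X × Y × X), ∀ z ∈ S,
        (z ∈ W ↔ (z.2.1 = gP W z ∧ gQ W z = true)) := by
      intro W z hz
      rw [← hiffT W z hz]
      refine (and_congr ?_ ?_).symm
      · rw [← hgPeq W z hz]
      · rw [← hgQeq W z hz, decide_eq_true_eq]
    apply Finset.ext
    intro z
    constructor
    · intro hzT
      have hzS := hT hzT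
      have h1 := (key T z hzS).mp hzT
      rw [hgPe, hgQe] at h1
      exact (key U z hzS).mpr h1
    · intro hzU
      have hzS := hU hzU
      have h1 := (key U z hzS).mp hzU
      rw [← hgPe, ← hgQe] at h1
      exact (key T z hzS).mpr h1
  -- Natarajan dimension transfer for the P-pattern class
  have hPdim : ∀ R : Finset (X × Y × X), R ⊆ S →
      NShatters (↑ΦP : Set (X × Y × X → Y)) R → R.card ≤ dP := by
    rintro R hR ⟨h1, hh1, h2, hh2, hne, hsel2⟩
    obtain ⟨π₁, hπ₁, rfl⟩ := hΦPsub hh1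
    obtain ⟨π₂, hπ₂, rfl⟩ := hΦPsub hh2
    have hinj1 : Set.InjOn (fun z : X × Y × X => z.1) R := by
      intro z hz w hw hzw
      rw [Finset.mem_coe] at hz hw
      by_contra hne'
      obtain ⟨h, hhΦ, hp1, hp2⟩ := hsel2 {z} (Finset.singleton_subset_iff.mpr hz)
      obtain ⟨π, hπ, rfl⟩ := hΦPsub hhΦ
      have e1 : π z.1 = π₁ z.1 := hp1 z hz (Finset.mem_singleton_self z)
      have e2 : π w.1 = π₂ w.1 := hp2 w hw (by
        rw [Finset.mem_singleton]
        exact fun h => hne' (h ▸ rfl))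
      have hzw' : z.1 = w.1 := hzw
      have e3 : π z.1 = π w.1 := by rw [hzw']
      have e4 : π₂ w.1 = π₂ z.1 := by rw [hzw']
      exact hne z hz (show π₁ z.1 = π₂ z.1 by rw [← e1, e3, e2, e4])
    have hNs : NShatters Pc (R.image (fun z => z.1)) := by
      refine ⟨π₁, hπ₁, π₂, hπ₂, ?_, ?_⟩
      · intro xx hxx
        obtain ⟨z, hzR, rfl⟩ := Finset.mem_image.mp hxx
        exact hne z hzR
      · intro T' hT'
        obtain ⟨h, hhΦ, hp1, hp2⟩ := hsel2 (R.filter (fun z => z.1 ∈ T'))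
          (Finset.filter_subset _ _)
        obtain ⟨π, hπ, rfl⟩ := hΦPsub hhΦ
        refine ⟨π, hπ, ?_, ?_⟩
        · intro xx hxx hxT
          obtain ⟨z, hzR, rfl⟩ := Finset.mem_image.mp hxx
          exact hp1 z hzR (Finset.mem_filter.mpr ⟨hzR, hxT⟩)
        · intro xx hxx hxT
          obtain ⟨z, hzR, rfl⟩ := Finset.mem_image.mp hxx
          exact hp2 z hzR (fun hmem => hxT (Finset.mem_filter.mp hmem).2)
    have hle := hP _ hNs
    rwa [Finset.card_image_of_injOn hinj1] at hle
  -- pseudo-dimension transfer for the Q-pattern class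
  have hQdim : ∀ R : Finset (X × Y × X), R ⊆ S →
      NShatters (↑ΦQ : Set (X × Y × X → Bool)) R → R.card ≤ dV := by
    rintro R hR ⟨h1, hh1, h2, hh2, hne, hsel2⟩
    have hpat : ∀ b : (X × Y × X) → Bool, ∃ v ∈ Vc, ∀ z ∈ R,
        (decide (ξ z ≤ v z.2.2) = b z) := by
      intro b
      obtain ⟨h, hhΦ, hp1, hp2⟩ := hsel2 (R.filter (fun z => b z = h1 z))
        (Finset.filter_subset _ _)
      obtain ⟨v, hv, rfl⟩ := hΦQsub hhΦ
      refine ⟨v, hv, fun z hz => ?_⟩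
      by_cases hb : b z = h1 z
      · have e := hp1 z hz (Finset.mem_filter.mpr ⟨hz, hb⟩)
        exact e.trans hb.symm
      · have e := hp2 z hz (fun hm => hb (Finset.mem_filter.mp hm).2)
        have h2b : h2 z = b z := by
          have hnz := hne z hz
          revert hnz hb
          cases b z <;> cases h1 z <;> cases h2 z <;> simp
        exact e.trans h2b
    have hpat' : ∀ TT : Finset (X × Y × X), ∃ v ∈ Vc, ∀ z ∈ R,
        ((ξ z ≤ v z.2.2) ↔ z ∈ TT) := by
      intro TT
      obtain ⟨v, hv, he⟩ := hpat (fun z => decide (z ∈ TT))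
      exact ⟨v, hv, fun z hz => decide_eq_decide.mp (he z hz)⟩
    have hinj2 : Set.InjOn (fun z : X × Y × X => z.2.2) R := by
      intro z hz w hw hzw
      rw [Finset.mem_coe] at hz hw
      by_contra hne'
      obtain ⟨v1, hv1, hb1⟩ := hpat' {z}
      obtain ⟨v2, hv2, hb2⟩ := hpat' (R.erase z)
      have e1 : ξ z ≤ v1 z.2.2 := (hb1 z hz).mpr (Finset.mem_singleton_self z)
      have e2 : ¬ (ξ w ≤ v1 w.2.2) := fun h =>
        hne' (Finset.mem_singleton.mp ((hb1 w hw).mp h)).symm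
      have e3 : ¬ (ξ z ≤ v2 z.2.2) := fun h =>
        (Finset.mem_erase.mp ((hb2 z hz).mp h)).1 rfl
      have e4 : ξ w ≤ v2 w.2.2 := (hb2 w hw).mpr
        (Finset.mem_erase.mpr ⟨fun h => hne' h.symm, hw⟩)
      have hzw' : z.2.2 = w.2.2 := hzw
      rw [← hzw'] at e2 e4
      linarith [not_le.mp e2, not_le.mp e3]
    have hps : PShatters Vc (R.image (fun z => z.2.2)) := by
      refine ⟨fun xx => if h : ∃ u ∈ R, u.2.2 = xx then ξ h.choose else 0, ?_⟩
      intro T' hT'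
      obtain ⟨v, hv, hvp⟩ := hpat' (R.filter (fun z => z.2.2 ∈ T'))
      refine ⟨v, hv, ?_⟩
      intro xx hxx
      obtain ⟨z, hzR, rfl⟩ := Finset.mem_image.mp hxx
      have hex : ∃ u ∈ R, u.2.2 = z.2.2 := ⟨z, hzR, rfl⟩
      show (if h : ∃ u ∈ R, u.2.2 = z.2.2 then ξ h.choose else 0) ≤ v z.2.2 ↔ z.2.2 ∈ T'
      rw [dif_pos hex]
      have hch := hex.choose_spec
      have hchz : hex.choose = z :=
        hinj2 (Finset.mem_coe.mpr hch.1) (Finset.mem_coe.mpr hzR) hch.2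
      rw [hchz, hvp z hzR]
      constructor
      · intro hmem
        exact (Finset.mem_filter.mp hmem).2
      · intro hmem
        exact Finset.mem_filter.mpr ⟨hzR, hmem⟩
    have hle := hVdim _ hps
    rwa [Finset.card_image_of_injOn hinj2] at hle
  -- growth bounds
  have hPcard : ΦP.card ≤ nsum A S.card dP := by
    have h := NS_growth S dP ΦP hΦPdist hPdim
    rwa [← hA] at h
  have hQcard : ΦQ.card ≤ nsum 2 S.card dV := by
    have h := NS_growth S dV ΦQ hΦQdist hQdim
    simpa using h
  set m := S.card with hm
  have hm1 : 1 ≤ m := Finset.card_pos.mpr ⟨z₀, hz₀⟩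
  have hbaseP : 0 < m * A^2 := by positivity
  have hbaseQ : 0 < m * 2^2 := by positivity
  have hKP : nsum A m dP ≤ (dP+1) * (m * A^2)^dP := by
    unfold nsum
    calc ∑ i ∈ Finset.range (dP+1), m.choose i * A^(2*i)
        ≤ ∑ _i ∈ Finset.range (dP+1), (m * A^2)^dP := by
          refine Finset.sum_le_sum fun i hi => ?_
          have hi' : i ≤ dP := by
            have := Finset.mem_range.mp hi
            omega
          calc m.choose i * A^(2*i) ≤ m^i * A^(2*i) :=
                Nat.mul_le_mul_right _ (Nat.choose_le_pow m i)
          _ = (m * A^2)^i := by rw [mul_pow, pow_mul]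
          _ ≤ (m * A^2)^dP := Nat.pow_le_pow_right hbaseP hi'
    _ = (dP+1) * (m * A^2)^dP := by
          rw [Finset.sum_const, Finset.card_range, smul_eq_mul]
  have hKQ : nsum 2 m dV ≤ (dV+1) * (m * 2^2)^dV := by
    unfold nsum
    calc ∑ i ∈ Finset.range (dV+1), m.choose i * 2^(2*i)
        ≤ ∑ _i ∈ Finset.range (dV+1), (m * 2^2)^dV := by
          refine Finset.sum_le_sum fun i hi => ?_
          have hi' : i ≤ dV := by
            have := Finset.mem_range.mp hi
            omega
          calc m.choose i * 2^(2*i) ≤ m^i * 2^(2*i) :=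
                Nat.mul_le_mul_right _ (Nat.choose_le_pow m i)
          _ = (m * 2^2)^i := by rw [mul_pow, pow_mul]
          _ ≤ (m * 2^2)^dV := Nat.pow_le_pow_right hbaseQ hi'
    _ = (dV+1) * (m * 2^2)^dV := by
          rw [Finset.sum_const, Finset.card_range, smul_eq_mul]
  have h2m : 2^m ≤ (64*m*A^2)^(dP+dV) := by
    have h1 : 2^m ≤ ΦP.card * ΦQ.card := by
      have h := hinj
      rwa [Finset.card_powerset, Finset.card_product] at h
    have hP' : ΦP.card ≤ (64*m*A^2)^dP := by
      calc ΦP.card ≤ nsum A m dP := hPcard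
      _ ≤ (dP+1) * (m*A^2)^dP := hKP
      _ ≤ 2^dP * (m*A^2)^dP :=
          Nat.mul_le_mul_right _ (Nat.succ_le_of_lt (Nat.lt_two_pow_self (n := dP)))
      _ = (2*(m*A^2))^dP := (mul_pow _ _ _).symm
      _ ≤ (64*m*A^2)^dP := by
          refine Nat.pow_le_pow_left ?_ _
          have h2 : 2*(m*A^2) ≤ 64*(m*A^2) := Nat.mul_le_mul_right _ (by norm_num)
          calc 2*(m*A^2) ≤ 64*(m*A^2) := h2
          _ = 64*m*A^2 := by ring
    have hQ' : ΦQ.card ≤ (64*m*A^2)^dV := by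
      calc ΦQ.card ≤ nsum 2 m dV := hQcard
      _ ≤ (dV+1) * (m*2^2)^dV := hKQ
      _ ≤ 2^dV * (m*2^2)^dV :=
          Nat.mul_le_mul_right _ (Nat.succ_le_of_lt (Nat.lt_two_pow_self (n := dV)))
      _ = (2*(m*2^2))^dV := (mul_pow _ _ _).symm
      _ ≤ (64*m*A^2)^dV := by
          refine Nat.pow_le_pow_left ?_ _
          have hA2 : 1 ≤ A^2 := Nat.one_le_pow _ _ (by omega)
          calc 2*(m*2^2) = (8*m) * 1 := by ring
          _ ≤ (64*m) * A^2 := Nat.mul_le_mul (by omega) hA2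
          _ = 64*m*A^2 := by ring
    calc 2^m ≤ ΦP.card * ΦQ.card := h1
    _ ≤ (64*m*A^2)^dP * (64*m*A^2)^dV := Nat.mul_le_mul hP' hQ'
    _ = (64*m*A^2)^(dP+dV) := (pow_add _ _ _).symm
  -- real arithmetic
  have hMr : (1:ℝ) ≤ (m:ℝ) := by exact_mod_cast hm1
  have hAr : (1:ℝ) ≤ (A:ℝ) := by exact_mod_cast hA1
  have hDr : (12:ℝ) ≤ (dP:ℝ) + (dV:ℝ) := by
    have h12 : (12:ℕ) ≤ dP + dV := by omega
    exact_mod_cast h12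
  have hDpos : (0:ℝ) < (dP:ℝ) + (dV:ℝ) := by linarith
  have hMpos : (0:ℝ) < (m:ℝ) := by linarith
  have hApos : (0:ℝ) < (A:ℝ) := by linarith
  have hcast : (2:ℝ)^m ≤ (64 * (m:ℝ) * (A:ℝ)^2)^(dP+dV) := by exact_mod_cast h2m
  have hlog1 : (m:ℝ) * Real.log 2
      ≤ ((dP:ℝ) + (dV:ℝ)) * Real.log (64 * (m:ℝ) * (A:ℝ)^2) := by
    have h0 : (0:ℝ) < 2^m := by positivity
    have h := Real.log_le_log h0 hcast
    rw [Real.log_pow, Real.log_pow] at h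
    push_cast at h
    exact h
  set c := Real.log 2 with hc
  set aa := Real.log (A:ℝ) with haa
  set u := Real.log ((dP:ℝ) + (dV:ℝ)) with hu
  set lm := Real.log (m:ℝ) with hlm
  have hcpos : (0:ℝ) < c := Real.log_pos (by norm_num)
  have hclb : (0.6931471803:ℝ) < c := Real.log_two_gt_d9
  have hcub : c < 0.6931471808 := Real.log_two_lt_d9
  have haa0 : 0 ≤ aa := Real.log_nonneg hAr
  have hu2 : (2:ℝ) ≤ u := by
    rw [hu, Real.le_log_iff_exp_le hDpos]
    have he : Real.exp 1 < 2.7182818286 := Real.exp_one_lt_d9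
    have he2 : Real.exp 2 = Real.exp 1 * Real.exp 1 := by
      rw [← Real.exp_add]; norm_num
    nlinarith [Real.exp_pos 1]
  have hdecomp : Real.log (64 * (m:ℝ) * (A:ℝ)^2) = 6*c + lm + 2*aa := by
    rw [Real.log_mul (by positivity) (by positivity),
        Real.log_mul (by positivity) (by positivity),
        Real.log_pow, show ((64:ℝ)) = 2^6 by norm_num, Real.log_pow]
    push_cast
    ring
  set t := c / (2*((dP:ℝ)+(dV:ℝ))) with ht
  have htpos : 0 < t := div_pos hcpos (by linarith)
  have hlogM : lm ≤ (m:ℝ) * t - 1 - Real.log t := by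
    have h1 : Real.log ((m:ℝ)*t) ≤ (m:ℝ)*t - 1 :=
      Real.log_le_sub_one_of_pos (mul_pos hMpos htpos)
    rw [Real.log_mul (ne_of_gt hMpos) (ne_of_gt htpos)] at h1
    linarith
  have hlogt : Real.log t = Real.log c - (c + u) := by
    rw [ht, Real.log_div (ne_of_gt hcpos) (by positivity),
        Real.log_mul (by norm_num) (ne_of_gt hDpos)]
  have hlc : (-0.45:ℝ) ≤ Real.log c := by
    have h1 : Real.log c⁻¹ ≤ c⁻¹ - 1 := Real.log_le_sub_one_of_pos (by positivity)
    rw [Real.log_inv] at h1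
    have h2 : c⁻¹ ≤ 1.45 := by
      rw [inv_eq_one_div, div_le_iff₀ hcpos]
      nlinarith
    linarith
  have hDt : ((dP:ℝ)+(dV:ℝ)) * ((m:ℝ) * t) = (m:ℝ) * c / 2 := by
    rw [ht]
    field_simp
  have hmain2 : (m:ℝ) * c / 2
      ≤ ((dP:ℝ)+(dV:ℝ)) * (7*c + 2*aa + u - 1 - Real.log c) := by
    have h1 : (m:ℝ) * c ≤ ((dP:ℝ)+(dV:ℝ)) * (6*c + lm + 2*aa) := by
      rw [← hdecomp]
      exact hlog1
    have h2 : ((dP:ℝ)+(dV:ℝ)) * (6*c + lm + 2*aa)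
        ≤ ((dP:ℝ)+(dV:ℝ)) * (6*c + ((m:ℝ)*t - 1 - (Real.log c - (c+u))) + 2*aa) := by
      refine mul_le_mul_of_nonneg_left ?_ (le_of_lt hDpos)
      have := hlogM
      rw [hlogt] at this
      linarith
    have h3 : ((dP:ℝ)+(dV:ℝ)) * (6*c + ((m:ℝ)*t - 1 - (Real.log c - (c+u))) + 2*aa)
        = ((dP:ℝ)+(dV:ℝ)) * (7*c + 2*aa + u - 1 - Real.log c) + ((dP:ℝ)+(dV:ℝ)) * ((m:ℝ)*t) := by
      ring
    rw [h3, hDt] at h2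
    linarith
  have hLdec : Real.log (2 * Real.exp 1 * (A:ℝ) * ((dP:ℝ)+(dV:ℝ))) = c + 1 + aa + u := by
    rw [Real.log_mul (by positivity) (ne_of_gt hDpos),
        Real.log_mul (by positivity) (ne_of_gt hApos),
        Real.log_mul (by norm_num) (by positivity), Real.log_exp]
  have hkey : 2 * (7*c + 2*aa + u - 1 - Real.log c) ≤ 6 * c * (c + 1 + aa + u) := by
    nlinarith [mul_le_mul_of_nonneg_right (le_of_lt hclb) haa0,
      mul_le_mul_of_nonneg_right (le_of_lt hclb) (by linarith : (0:ℝ) ≤ u),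
      mul_le_mul_of_nonneg_right (le_of_lt hclb) (by linarith : (0:ℝ) ≤ c)]
  have hfin : (m:ℝ) * c ≤ (6 * ((dP:ℝ)+(dV:ℝ)) * (c + 1 + aa + u)) * c := by
    have h4 := mul_le_mul_of_nonneg_left hkey (le_of_lt hDpos)
    calc (m:ℝ) * c = 2 * ((m:ℝ)*c/2) := by ring
    _ ≤ 2 * (((dP:ℝ)+(dV:ℝ)) * (7*c + 2*aa + u - 1 - Real.log c)) := by linarith [hmain2]
    _ = ((dP:ℝ)+(dV:ℝ)) * (2 * (7*c + 2*aa + u - 1 - Real.log c)) := by ring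
    _ ≤ ((dP:ℝ)+(dV:ℝ)) * (6 * c * (c + 1 + aa + u)) := h4
    _ = (6 * ((dP:ℝ)+(dV:ℝ)) * (c + 1 + aa + u)) * c := by ring
  have hfinal := le_of_mul_le_mul_right hfin hcpos
  rw [hLdec]
  exact hfinal
end
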